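/- arXiv:2604.13498 — 3 statements merged into one kernel-verified Lean document; each statement's English description precedes it below -/
import Mathlib

section
/- Let V ⊆ ℝ³ be a linear subspace and P the orthogonal projection of ℝ³ onto V, let Φ be a Young function, and let f: (tQ')₁ × ℝ^{3×3} → [0,∞) be a Carathéodory function (measurable in x, continuous in ξ) with f(x,ξ) ≤ β(1+Φ(|ξ|)) for some β>0. Then for every t>0 and every ξ_α ∈ V² one has the equality of infima inf{ ∫_{(tQ')₁} f(x, (ξ_α+∇_αφ | ∇₃φ)) dx : φ ∈ 𝒜_t(V) } = inf{ ∫_{(tQ')₁} f̄(x, (ξ_α+∇_αφ | ∇₃φ)) dx : φ ∈ 𝒜_t }, i.e. the cell infimum over tangent-space-valued Lipschitz test maps equals the unconstrained cell infimum for the penalized integrand f̄. -/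
open MeasureTheory Filter

noncomputable section

abbrev V3 : Type := Fin 3 → ℝ
abbrev V2 : Type := Fin 2 → ℝ
abbrev M33 : Type := Matrix (Fin 3) (Fin 3) ℝ
abbrev M32 : Type := Matrix (Fin 3) (Fin 2) ℝ

/-- `Φ : [0,∞) → [0,∞)` is a Young function: continuous, convex, positive for `t > 0`,
`Φ(t)/t → 0` as `t → 0⁺` and `Φ(t)/t → ∞` as `t → ∞`. -/
def IsYoung (Φ : ℝ → ℝ) : Prop :=
  ContinuousOn Φ (Set.Ici 0) ∧ ConvexOn ℝ (Set.Ici 0) Φ ∧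
  (∀ t : ℝ, 0 < t → 0 < Φ t) ∧
  Tendsto (fun t => Φ t / t) (nhdsWithin 0 (Set.Ioi 0)) (nhds 0) ∧
  Tendsto (fun t => Φ t / t) atTop atTop

/-- The Δ₂ condition (at infinity). -/
def Delta2 (Φ : ℝ → ℝ) : Prop :=
  ∃ α : ℝ, 0 < α ∧ ∃ t₀ : ℝ, 0 ≤ t₀ ∧ ∀ t, t₀ ≤ t → Φ (2 * t) ≤ α * Φ t

/-- The ∇₂ condition. -/
def Nabla2 (Φ : ℝ → ℝ) : Prop :=
  ∃ β : ℝ, 0 < β ∧ ∃ t₀ : ℝ, 1 < t₀ ∧ ∀ t, t₀ ≤ t → Φ t ≤ (1 / (2 * β)) * Φ (β * t)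

/-- Frobenius norm of a real matrix. -/
def frobNorm {m n : ℕ} (ξ : Matrix (Fin m) (Fin n) ℝ) : ℝ :=
  Real.sqrt (∑ i, ∑ j, (ξ i j) ^ 2)

/-- The open cylinder `(tQ')₁ = (−t/2,t/2)² × (−1/2,1/2)`. -/
def openCyl (t : ℝ) : Set V3 := {x | |x 0| < t / 2 ∧ |x 1| < t / 2 ∧ |x 2| < 1 / 2}

/-- The lateral boundary `∂((−t/2,t/2)²) × (−1/2,1/2)`. -/
def latBdry (t : ℝ) : Set V3 := {x | max |x 0| |x 1| = t / 2 ∧ |x 2| < 1 / 2}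

/-- The (a.e. defined, via Rademacher) matrix of partial derivatives of a Lipschitz map:
row `i`, column `j` is `∂φᵢ/∂xⱼ`. -/
def gradm (φ : V3 → V3) (x : V3) : M33 :=
  Matrix.of fun i j => fderiv ℝ φ x (Pi.single j 1) i

/-- Planar-gradient matrix (3×2) of a map on `ℝ²`. -/
def gradm2 (ψ : V2 → V3) (y : V2) : M32 :=
  Matrix.of fun i j => fderiv ℝ ψ y (Pi.single j 1) i

/-- The 3×3 matrix `(ξ_α + ∇_αφ | ∇₃φ)`: first two columns of `A` shifted by `ξ_α`,
third column untouched. -/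
def withCol (ξα : M32) (A : M33) : M33 :=
  Matrix.of fun i j => (if h : (j : ℕ) < 2 then ξα i ⟨(j : ℕ), h⟩ else 0) + A i j

/-- The admissible class `𝒜_t`: Lipschitz maps vanishing on the lateral boundary. -/
def AdmSet (t : ℝ) : Set (V3 → V3) :=
  {φ | (∃ K : NNReal, LipschitzWith K φ) ∧ ∀ x ∈ latBdry t, φ x = 0}

/-- The constrained admissible class `𝒜_t(V)`: members of `𝒜_t` with values in `V`. -/
def AdmVSet (t : ℝ) (V : Submodule ℝ V3) : Set (V3 → V3) :=
  {φ | φ ∈ AdmSet t ∧ ∀ x, φ x ∈ V}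

/-- The cell energy `∫_{(tQ')₁} f(x, (ξ_α + ∇_αφ | ∇₃φ)) dx`. -/
def cellE (f : V3 → M33 → ℝ) (ξα : M32) (t : ℝ) (φ : V3 → V3) : ℝ :=
  ∫ x in openCyl t, f x (withCol ξα (gradm φ x))

/-- The cell infimum over a class `S` of test maps. -/
def cellInf (f : V3 → M33 → ℝ) (ξα : M32) (t : ℝ) (S : Set (V3 → V3)) : ℝ :=
  sInf ((fun φ => cellE f ξα t φ) '' S)

/-- The constrained tangentially homogenized density `Tf⁰hom(V, ξ_α)`. -/
def Tf0hom (f : V3 → M33 → ℝ) (V : Submodule ℝ V3) (ξα : M32) : ℝ :=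
  liminf (fun t : ℝ => (t ^ 2)⁻¹ * cellInf f ξα t (AdmVSet t V)) atTop

/-- The unconstrained homogenized density (liminf of the scaled cell infima over `𝒜_t`). -/
def homDens (f : V3 → M33 → ℝ) (ξα : M32) : ℝ :=
  liminf (fun t : ℝ => (t ^ 2)⁻¹ * cellInf f ξα t (AdmSet t)) atTop

/-- `P` is the orthogonal projection of `ℝ³` onto the subspace `V` (with respect to the
Euclidean inner product). -/
def IsOrthProjOnto (V : Submodule ℝ V3) (P : V3 → V3) : Prop :=
  IsLinearMap ℝ P ∧ (∀ x, P x ∈ V) ∧ (∀ x ∈ V, P x = x) ∧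
    (∀ x : V3, ∀ v ∈ V, (∑ i, (x i - P x i) * v i) = 0)

/-- Column-wise action `𝐏ξ = (Pξ₁ | Pξ₂ | Pξ₃)` of a projection on 3×3 matrices. -/
def Pmat (P : V3 → V3) (ξ : M33) : M33 :=
  Matrix.of fun i j => P (fun k => ξ k j) i

/-- The penalized integrand `f̄(x,ξ) = f(x,𝐏ξ) + Φ(|ξ − 𝐏ξ|)`. -/
def fbar (Φ : ℝ → ℝ) (P : V3 → V3) (f : V3 → M33 → ℝ) : V3 → M33 → ℝ :=
  fun x ξ => f x (Pmat P ξ) + Φ (frobNorm (ξ - Pmat P ξ))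

/-- Carathéodory function: measurable in `x`, continuous in `ξ`. -/
def Caratheodory (f : V3 → M33 → ℝ) : Prop :=
  (∀ ξ, Measurable fun x => f x ξ) ∧ (∀ x, Continuous fun ξ => f x ξ)

/-- (H1): 1-periodicity in the planar variable. -/
def H1per (f : V3 → M33 → ℝ) : Prop :=
  ∀ (x : V3) (ξ : M33) (i : Fin 3), (i : ℕ) < 2 → f (x + Pi.single i 1) ξ = f x ξ

/-- (H2): `Φ`-coercivity and `Φ`-growth, for a.e. `x` and all `ξ`. -/
def H2growth (Φ : ℝ → ℝ) (α β : ℝ) (f : V3 → M33 → ℝ) : Prop :=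
  ∀ᵐ x : V3 ∂volume, ∀ ξ : M33, α * Φ (frobNorm ξ) ≤ f x ξ ∧ f x ξ ≤ β * (1 + Φ (frobNorm ξ))

/-- `ξ_α ∈ V²`: both columns of the 3×2 matrix belong to `V`. -/
def colsIn (V : Submodule ℝ V3) (ξα : M32) : Prop :=
  ∀ j : Fin 2, (fun i => ξα i j) ∈ V

/-- The open unit square `Q' = (−1/2,1/2)²`. -/
def sq2 : Set V2 := {y | |y 0| < 1 / 2 ∧ |y 1| < 1 / 2}
namespace Stmt0Aux

lemma young_zero {Φ : ℝ → ℝ} (hΦ : IsYoung Φ) : Φ 0 = 0 := by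
  obtain ⟨hc, -, -, h0, -⟩ := hΦ
  have h1 : Tendsto Φ (nhdsWithin 0 (Set.Ioi 0)) (nhds (Φ 0)) :=
    (hc 0 Set.self_mem_Ici).mono Set.Ioi_subset_Ici_self
  have h2 : Tendsto Φ (nhdsWithin 0 (Set.Ioi 0)) (nhds 0) := by
    have hid : Tendsto (fun t : ℝ => t) (nhdsWithin 0 (Set.Ioi 0)) (nhds 0) :=
      tendsto_id.mono_left nhdsWithin_le_nhds
    have h3 := h0.mul hid
    rw [zero_mul] at h3
    refine h3.congr' ?_
    filter_upwards [self_mem_nhdsWithin] with t ht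
    exact div_mul_cancel₀ _ (ne_of_gt ht)
  exact tendsto_nhds_unique h1 h2

lemma young_nonneg {Φ : ℝ → ℝ} (hΦ : IsYoung Φ) {s : ℝ} (hs : 0 ≤ s) : 0 ≤ Φ s := by
  rcases hs.eq_or_lt with h | h
  · rw [← h, young_zero hΦ]
  · exact (hΦ.2.2.1 s h).le

lemma young_mono {Φ : ℝ → ℝ} (hΦ : IsYoung Φ) {s t : ℝ} (hs : 0 ≤ s) (hst : s ≤ t) :
    Φ s ≤ Φ t := by
  rcases (hs.trans hst).eq_or_lt with h | ht
  · have hs0 : s = 0 := le_antisymm (hst.trans h.symm.le) hs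
    rw [hs0, ← h]
  · have hconv := hΦ.2.1
    have ha : (0:ℝ) ≤ s / t := div_nonneg hs ht.le
    have hb : (0:ℝ) ≤ 1 - s / t := by
      have : s / t ≤ 1 := (div_le_one ht).mpr hst
      linarith
    have h1 := hconv.2 (Set.mem_Ici.mpr ht.le) (Set.mem_Ici.mpr le_rfl) ha hb (by ring)
    have hst' : s / t * t + (1 - s / t) * 0 = s := by
      field_simp
      ring
    rw [smul_eq_mul, smul_eq_mul, smul_eq_mul, smul_eq_mul, hst', young_zero hΦ, mul_zero,
      add_zero] at h1
    calc Φ s ≤ s / t * Φ t := h1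
      _ ≤ 1 * Φ t := by
          apply mul_le_mul_of_nonneg_right ((div_le_one ht).mpr hst)
          exact young_nonneg hΦ ht.le
      _ = Φ t := one_mul _

lemma frobNorm_nonneg {m n : ℕ} (ξ : Matrix (Fin m) (Fin n) ℝ) : 0 ≤ frobNorm ξ :=
  Real.sqrt_nonneg _

lemma frobNorm_zero33 : frobNorm (0 : M33) = 0 := by
  simp [frobNorm]

lemma abs_entry_le_frobNorm {m n : ℕ} (ξ : Matrix (Fin m) (Fin n) ℝ) (i : Fin m) (j : Fin n) :
    |ξ i j| ≤ frobNorm ξ := by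
  rw [← Real.sqrt_sq_eq_abs]
  apply Real.sqrt_le_sqrt
  calc (ξ i j) ^ 2 ≤ ∑ j', (ξ i j') ^ 2 :=
        Finset.single_le_sum (f := fun j' => (ξ i j') ^ 2)
          (fun _ _ => sq_nonneg _) (Finset.mem_univ j)
    _ ≤ ∑ i', ∑ j', (ξ i' j') ^ 2 :=
        Finset.single_le_sum (f := fun i' => ∑ j', (ξ i' j') ^ 2)
          (fun _ _ => Finset.sum_nonneg fun _ _ => sq_nonneg _) (Finset.mem_univ i)

lemma frobNorm_le_of_entries {ξ : M33} {M : ℝ} (hM : 0 ≤ M) (h : ∀ i j, |ξ i j| ≤ M) :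
    frobNorm ξ ≤ 3 * M := by
  have h2 : ∀ i j, (ξ i j) ^ 2 ≤ M ^ 2 := fun i j => by
    rw [← sq_abs]
    exact pow_le_pow_left₀ (abs_nonneg _) (h i j) 2
  have hsum : (∑ i, ∑ j, (ξ i j) ^ 2) ≤ (3 * M) ^ 2 := by
    calc (∑ i, ∑ j, (ξ i j) ^ 2) ≤ ∑ _i : Fin 3, ∑ _j : Fin 3, M ^ 2 :=
          Finset.sum_le_sum fun i _ => Finset.sum_le_sum fun j _ => h2 i j
      _ = (3 * M) ^ 2 := by simp [Finset.sum_const]; ring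
  calc frobNorm ξ ≤ Real.sqrt ((3 * M) ^ 2) := Real.sqrt_le_sqrt hsum
    _ = 3 * M := Real.sqrt_sq (by positivity)

lemma gradm_col_mem (V : Submodule ℝ V3) {φ : V3 → V3} (hφ : ∀ x, φ x ∈ V) (x : V3)
    (j : Fin 3) : (fun i => gradm φ x i j) ∈ V := by
  have hcl : IsClosed (V : Set V3) := Submodule.closed_of_finiteDimensional V
  by_cases hd : DifferentiableAt ℝ φ x
  · have heq : (fun i => gradm φ x i j) = fderiv ℝ φ x (Pi.single j 1) := rfl
    rw [heq]
    have htend : Tendsto (fun n : ℕ => ‖((n : ℝ))‖) atTop atTop :=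
      (tendsto_natCast_atTop_atTop (R := ℝ)).congr fun n => (Real.norm_natCast n).symm
    have hlim := hd.hasFDerivAt.lim (Pi.single j 1) htend
    exact hcl.mem_of_tendsto hlim (Filter.Eventually.of_forall fun n =>
      V.smul_mem _ (V.sub_mem (hφ _) (hφ _)))
  · have heq : (fun i => gradm φ x i j) = (0 : V3) := by
      funext i
      show fderiv ℝ φ x (Pi.single j 1) i = 0
      rw [fderiv_zero_of_not_differentiableAt hd]
      rfl
    rw [heq]; exact V.zero_mem

lemma withCol_col_mem {V : Submodule ℝ V3} {ξα : M32} (hξα : colsIn V ξα) {A : M33}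
    (hA : ∀ j, (fun i => A i j) ∈ V) (j : Fin 3) :
    (fun i => withCol ξα A i j) ∈ V := by
  by_cases h : (j : ℕ) < 2
  · have heq : (fun i => withCol ξα A i j) = (fun i => ξα i ⟨(j : ℕ), h⟩) + fun i => A i j := by
      funext i
      show (if h' : (j : ℕ) < 2 then ξα i ⟨(j : ℕ), h'⟩ else 0) + A i j = _
      rw [dif_pos h]; rfl
    rw [heq]
    exact V.add_mem (hξα ⟨(j : ℕ), h⟩) (hA j)
  · have heq : (fun i => withCol ξα A i j) = fun i => A i j := by
      funext i
      show (if h' : (j : ℕ) < 2 then ξα i ⟨(j : ℕ), h'⟩ else 0) + A i j = A i j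
      rw [dif_neg h, zero_add]
    rw [heq]
    exact hA j

lemma Pmat_fix {V : Submodule ℝ V3} {P : V3 → V3} (hP : IsOrthProjOnto V P) {m : M33}
    (h : ∀ j, (fun i => m i j) ∈ V) : Pmat P m = m := by
  apply Matrix.ext
  intro i j
  show P (fun k => m k j) i = m i j
  exact congrFun (hP.2.2.1 _ (h j)) i

lemma Pmat_withCol {V : Submodule ℝ V3} {P : V3 → V3} (hP : IsOrthProjOnto V P)
    {ξα : M32} (hξα : colsIn V ξα) (A : M33) :
    withCol ξα (Pmat P A) = Pmat P (withCol ξα A) := by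
  have hlin := hP.1
  apply Matrix.ext
  intro i j
  show (if h : (j : ℕ) < 2 then ξα i ⟨(j : ℕ), h⟩ else 0) + P (fun k => A k j) i
      = P (fun k => withCol ξα A k j) i
  by_cases h : (j : ℕ) < 2
  · have hcol : (fun k => withCol ξα A k j)
        = (fun k => ξα k ⟨(j : ℕ), h⟩) + fun k => A k j := by
      funext k
      show (if h' : (j : ℕ) < 2 then ξα k ⟨(j : ℕ), h'⟩ else 0) + A k j = _
      rw [dif_pos h]; rfl
    rw [hcol, hlin.map_add, dif_pos h]
    have hfix := hP.2.2.1 _ (hξα ⟨(j : ℕ), h⟩)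
    rw [Pi.add_apply, hfix]
  · have hcol : (fun k => withCol ξα A k j) = fun k => A k j := by
      funext k
      show (if h' : (j : ℕ) < 2 then ξα k ⟨(j : ℕ), h'⟩ else 0) + A k j = A k j
      rw [dif_neg h, zero_add]
    rw [hcol, dif_neg h, zero_add]

lemma gradm_comp {P : V3 → V3} (Pc : V3 →L[ℝ] V3) (hPc : ∀ y, Pc y = P y)
    {φ : V3 → V3} {x : V3} (hd : DifferentiableAt ℝ φ x) :
    gradm (fun y => P (φ y)) x = Pmat P (gradm φ x) := by
  have h : HasFDerivAt (fun y => P (φ y)) ((Pc.comp (fderiv ℝ φ x))) x := by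
    have h0 := Pc.hasFDerivAt.comp x hd.hasFDerivAt
    refine HasFDerivAt.congr_of_eventuallyEq h0 ?_
    exact Filter.Eventually.of_forall fun y => (hPc (φ y)).symm
  apply Matrix.ext
  intro i j
  show fderiv ℝ (fun y => P (φ y)) x (Pi.single j 1) i = P (fun k => gradm φ x k j) i
  rw [h.fderiv, ← hPc]
  rfl

lemma openCyl_measure_lt_top (t : ℝ) : volume (openCyl t) < ⊤ := by
  set R : ℝ := |t| + 1 with hR
  have ht2 : t / 2 ≤ R := by
    have := le_abs_self t
    have := abs_nonneg t
    simp only [hR]; linarith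
  have h12 : (1 : ℝ) / 2 ≤ R := by
    have := abs_nonneg t
    simp only [hR]; linarith
  have hsub : openCyl t ⊆ Set.pi Set.univ (fun _ : Fin 3 => Set.Ioo (-R) R) := by
    intro x hx
    obtain ⟨h0, h1, h2⟩ := hx
    intro i _
    have habs : |x i| < R := by
      fin_cases i
      · exact lt_of_lt_of_le h0 ht2
      · exact lt_of_lt_of_le h1 ht2
      · exact lt_of_lt_of_le h2 h12
    exact abs_lt.mp habs
  calc volume (openCyl t) ≤ volume (Set.pi Set.univ fun _ : Fin 3 => Set.Ioo (-R) R) :=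
        measure_mono hsub
    _ < ⊤ := by
        rw [volume_pi_pi]
        simp only [Real.volume_Ioo, Finset.prod_const, Finset.card_univ, Fintype.card_fin]
        exact ENNReal.pow_lt_top ENNReal.ofReal_lt_top

end Stmt0Aux

open Stmt0Aux in
/-- the constrained cell infimum over tangent-space-valued Lipschitz test maps
equals the unconstrained cell infimum for the penalized integrand `f̄`. -/
theorem stmt_0
    (Φ : ℝ → ℝ) (hΦ : IsYoung Φ)
    (V : Submodule ℝ V3) (P : V3 → V3) (hP : IsOrthProjOnto V P)
    (f : V3 → M33 → ℝ) (hf : Caratheodory f)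
    (hf0 : ∀ x ξ, 0 ≤ f x ξ)
    (β : ℝ) (hβ : 0 < β) (hgrowth : ∀ x ξ, f x ξ ≤ β * (1 + Φ (frobNorm ξ)))
    (t : ℝ) (ht : 0 < t) (ξα : M32) (hξα : colsIn V ξα) :
    cellInf f ξα t (AdmVSet t V) = cellInf (fbar Φ P f) ξα t (AdmSet t) := by
  classical
  obtain ⟨hfmeas, hfcont⟩ := hf
  have hΦnn : ∀ s : ℝ, 0 ≤ s → 0 ≤ Φ s := fun s hs => young_nonneg hΦ hs
  let Pl : V3 →ₗ[ℝ] V3 := IsLinearMap.mk' P hP.1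
  let Pc : V3 →L[ℝ] V3 := ⟨Pl, Pl.continuous_of_finiteDimensional⟩
  have hPc : ∀ y, Pc y = P y := fun y => rfl
  have hfbar0 : ∀ x ξ, 0 ≤ fbar Φ P f x ξ := fun x ξ =>
    add_nonneg (hf0 _ _) (hΦnn _ (frobNorm_nonneg _))
  have hE1nn : ∀ φ, 0 ≤ cellE f ξα t φ := fun φ => integral_nonneg fun x => hf0 _ _
  have hE2nn : ∀ φ, 0 ≤ cellE (fbar Φ P f) ξα t φ := fun φ =>
    integral_nonneg fun x => hfbar0 _ _
  have hzeroV : (fun _ : V3 => (0 : V3)) ∈ AdmVSet t V :=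
    ⟨⟨⟨0, LipschitzWith.const 0⟩, fun x _ => rfl⟩, fun x => V.zero_mem⟩
  have hEq : ∀ φ ∈ AdmVSet t V, cellE (fbar Φ P f) ξα t φ = cellE f ξα t φ := by
    intro φ hφ
    unfold cellE
    refine integral_congr_ae (Filter.Eventually.of_forall fun x => ?_)
    have hcols : ∀ j, (fun i => withCol ξα (gradm φ x) i j) ∈ V :=
      withCol_col_mem hξα (gradm_col_mem V hφ.2 x)
    have hfix : Pmat P (withCol ξα (gradm φ x)) = withCol ξα (gradm φ x) := Pmat_fix hP hcols
    show f x (Pmat P _) + Φ (frobNorm _) = _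
    rw [hfix, sub_self, frobNorm_zero33, young_zero hΦ, add_zero]
  have hS1ne : ((fun φ => cellE f ξα t φ) '' AdmVSet t V).Nonempty := ⟨_, ⟨_, hzeroV, rfl⟩⟩
  have hS2ne : ((fun φ => cellE (fbar Φ P f) ξα t φ) '' AdmSet t).Nonempty :=
    ⟨_, ⟨_, hzeroV.1, rfl⟩⟩
  have hbdd1 : BddBelow ((fun φ => cellE f ξα t φ) '' AdmVSet t V) := by
    refine ⟨0, ?_⟩; rintro a ⟨φ, -, rfl⟩; exact hE1nn φ
  have hbdd2 : BddBelow ((fun φ => cellE (fbar Φ P f) ξα t φ) '' AdmSet t) := by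
    refine ⟨0, ?_⟩; rintro a ⟨φ, -, rfl⟩; exact hE2nn φ
  have hsub : ((fun φ => cellE f ξα t φ) '' AdmVSet t V)
      ⊆ ((fun φ => cellE (fbar Φ P f) ξα t φ) '' AdmSet t) := by
    rintro a ⟨φ, hφ, rfl⟩
    exact ⟨φ, hφ.1, hEq φ hφ⟩
  -- integrability of the penalized composite for any Lipschitz test map
  have hint : ∀ (φ : V3 → V3) (K : NNReal), LipschitzWith K φ →
      Integrable (fun x => fbar Φ P f x (withCol ξα (gradm φ x)))
        (volume.restrict (openCyl t)) := by
    intro φ K hK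
    haveI : IsFiniteMeasure (volume.restrict (openCyl t)) :=
      ⟨by rw [Measure.restrict_apply_univ]; exact openCyl_measure_lt_top t⟩
    set g : V3 → (Fin 3 → Fin 3 → ℝ) := fun x => withCol ξα (gradm φ x) with hgdef
    set gP : V3 → (Fin 3 → Fin 3 → ℝ) := fun x i j => Pmat P (g x) i j with hgPdef
    have hgm : Measurable g := by
      apply measurable_pi_lambda; intro i; apply measurable_pi_lambda; intro j
      have h1 : Measurable fun x => fderiv ℝ φ x (Pi.single j 1) :=
        measurable_fderiv_apply_const ℝ φ (Pi.single j 1)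
      have h2 : Measurable fun x => fderiv ℝ φ x (Pi.single j 1) i :=
        (measurable_pi_apply i).comp h1
      exact measurable_const.add h2
    have hgent : ∀ i j, Measurable fun x => g x i j := fun i j =>
      (measurable_pi_apply j).comp ((measurable_pi_apply i).comp hgm)
    have hcolm : ∀ j, Measurable fun x => (fun k => g x k j : V3) := fun j =>
      measurable_pi_lambda _ fun k => hgent k j
    have hgPm : Measurable gP := by
      apply measurable_pi_lambda; intro i; apply measurable_pi_lambda; intro j
      show Measurable fun x => Pc (fun k => g x k j) i
      exact (measurable_pi_apply i).comp (Pc.continuous.measurable.comp (hcolm j))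
    have hfm1 : Measurable fun x => f x (gP x) := by
      have hu : Measurable (Function.uncurry fun (m : Fin 3 → Fin 3 → ℝ) (x : V3) => f x m) :=
        measurable_uncurry_of_continuous_of_measurable (ι := Fin 3 → Fin 3 → ℝ) (fun x => hfcont x) (fun m => hfmeas m)
      exact hu.comp (hgPm.prodMk measurable_id)
    have hΦc : Continuous fun s : ℝ => Φ (max s 0) :=
      hΦ.1.comp_continuous (continuous_id.max continuous_const) fun s => Set.mem_Ici.mpr (le_max_right _ _)
    have hfrm : Measurable fun x => frobNorm (g x - gP x) := by
      show Measurable fun x => Real.sqrt (∑ i, ∑ j, ((g x - gP x) i j) ^ 2)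
      apply Real.continuous_sqrt.measurable.comp
      apply Finset.measurable_sum; intro i _
      apply Finset.measurable_sum; intro j _
      have hm : Measurable fun x => g x i j - gP x i j :=
        (hgent i j).sub ((measurable_pi_apply j).comp ((measurable_pi_apply i).comp hgPm))
      exact hm.pow_const 2
    have hΦm : Measurable fun x => Φ (frobNorm (g x - gP x)) := by
      have h1 : Measurable fun x => Φ (max (frobNorm (g x - gP x)) 0) :=
        hΦc.measurable.comp hfrm
      have heq : (fun x => Φ (frobNorm (g x - gP x)))
          = fun x => Φ (max (frobNorm (g x - gP x)) 0) := by
        funext x; exact congrArg Φ (max_eq_left (frobNorm_nonneg _)).symm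
      rw [heq]; exact h1
    have hFm : Measurable fun x => fbar Φ P f x (withCol ξα (gradm φ x)) := by
      show Measurable fun x => f x (gP x) + Φ (frobNorm (g x - gP x))
      exact hfm1.add hΦm
    -- uniform bound
    set Kr : ℝ := (K : ℝ) with hKrdef
    set B : ℝ := frobNorm ξα with hBdef
    set M : ℝ := Kr + B with hMdef
    have hB : 0 ≤ B := frobNorm_nonneg _
    have hKr : 0 ≤ Kr := K.coe_nonneg
    have hM : 0 ≤ M := add_nonneg hKr hB
    set CP : ℝ := ‖Pc‖ with hCPdef
    have hCP : 0 ≤ CP := norm_nonneg _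
    have hgradent : ∀ x i j, |gradm φ x i j| ≤ Kr := by
      intro x i j
      have h1 : ‖fderiv ℝ φ x‖ ≤ Kr := norm_fderiv_le_of_lipschitz ℝ hK
      have h2 : ‖fderiv ℝ φ x (Pi.single j 1)‖ ≤ ‖fderiv ℝ φ x‖ * ‖(Pi.single j 1 : V3)‖ :=
        (fderiv ℝ φ x).le_opNorm _
      have h3 : ‖(Pi.single j 1 : V3)‖ = 1 := by rw [Pi.norm_single]; simp
      have h4 : |fderiv ℝ φ x (Pi.single j 1) i| ≤ ‖fderiv ℝ φ x (Pi.single j 1)‖ := by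
        rw [← Real.norm_eq_abs]; exact norm_le_pi_norm _ i
      calc |gradm φ x i j| = |fderiv ℝ φ x (Pi.single j 1) i| := rfl
        _ ≤ ‖fderiv ℝ φ x (Pi.single j 1)‖ := h4
        _ ≤ ‖fderiv ℝ φ x‖ * ‖(Pi.single j 1 : V3)‖ := h2
        _ ≤ Kr := by rw [h3, mul_one]; exact h1
    have hgent' : ∀ x i j, |g x i j| ≤ M := by
      intro x i j
      show |(if h : (j : ℕ) < 2 then ξα i ⟨(j : ℕ), h⟩ else 0) + gradm φ x i j| ≤ M
      refine (abs_add_le _ _).trans ?_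
      have h1 : |(if h : (j : ℕ) < 2 then ξα i ⟨(j : ℕ), h⟩ else 0)| ≤ B := by
        split
        · exact abs_entry_le_frobNorm ξα _ _
        · simpa using hB
      have h2 := hgradent x i j
      rw [hMdef]; linarith
    have hcolnorm : ∀ x j, ‖(fun k => g x k j : V3)‖ ≤ M := by
      intro x j
      rw [pi_norm_le_iff_of_nonneg hM]
      intro k
      rw [Real.norm_eq_abs]; exact hgent' x k j
    have hPent : ∀ x i j, |gP x i j| ≤ CP * M := by
      intro x i j
      have h1 : |Pc (fun k => g x k j) i| ≤ ‖Pc (fun k => g x k j)‖ := by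
        rw [← Real.norm_eq_abs]; exact norm_le_pi_norm _ i
      have h2 : ‖Pc (fun k => g x k j)‖ ≤ CP * ‖(fun k => g x k j : V3)‖ := Pc.le_opNorm _
      have h3 := hcolnorm x j
      calc |gP x i j| = |Pc (fun k => g x k j) i| := rfl
        _ ≤ CP * ‖(fun k => g x k j : V3)‖ := h1.trans h2
        _ ≤ CP * M := mul_le_mul_of_nonneg_left h3 hCP
    set R : ℝ := 3 * ((1 + CP) * M) with hRdef
    have hR0 : 0 ≤ R := by positivity
    have hfr1 : ∀ x, frobNorm (gP x) ≤ R := by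
      intro x
      have h := frobNorm_le_of_entries (M := CP * M) (by positivity) (hPent x)
      calc frobNorm (gP x) ≤ 3 * (CP * M) := h
        _ ≤ R := by rw [hRdef]; nlinarith
    have hfr2 : ∀ x, frobNorm (g x - gP x) ≤ R := by
      intro x
      refine frobNorm_le_of_entries (M := (1 + CP) * M) (by positivity) ?_
      intro i j
      have h1 := hgent' x i j
      have h2 := hPent x i j
      have heq : |(g x - gP x) i j| = |g x i j - gP x i j| := rfl
      rw [heq]
      calc |g x i j - gP x i j| = |g x i j + -(gP x i j)| := by
            rw [sub_eq_add_neg]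
        _ ≤ |g x i j| + |-(gP x i j)| := abs_add_le _ _
        _ = |g x i j| + |gP x i j| := by rw [abs_neg]
        _ ≤ (1 + CP) * M := by nlinarith
    set C : ℝ := β * (1 + Φ R) + Φ R with hCdef
    have hbound : ∀ x, |fbar Φ P f x (withCol ξα (gradm φ x))| ≤ C := by
      intro x
      have hnn := hfbar0 x (withCol ξα (gradm φ x))
      rw [abs_of_nonneg hnn]
      show f x (gP x) + Φ (frobNorm (g x - gP x)) ≤ C
      have h1 : f x (gP x) ≤ β * (1 + Φ (frobNorm (gP x))) := hgrowth _ _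
      have h2 : Φ (frobNorm (gP x)) ≤ Φ R :=
        young_mono hΦ (frobNorm_nonneg _) (hfr1 x)
      have h3 : Φ (frobNorm (g x - gP x)) ≤ Φ R :=
        young_mono hΦ (frobNorm_nonneg _) (hfr2 x)
      rw [hCdef]
      nlinarith
    refine Integrable.mono' (integrable_const C) hFm.aestronglyMeasurable ?_
    exact Filter.Eventually.of_forall fun x => by rw [Real.norm_eq_abs]; exact hbound x
  -- the key inequality: projecting a test map decreases the (penalized) energy
  have hkey : ∀ φ ∈ AdmSet t, cellE f ξα t (fun y => P (φ y)) ≤ cellE (fbar Φ P f) ξα t φ := by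
    intro φ hφ
    obtain ⟨K, hK⟩ := hφ.1
    unfold cellE
    refine integral_mono_of_nonneg (Filter.Eventually.of_forall fun x => hf0 _ _)
      (hint φ K hK) ?_
    have hae : ∀ᵐ x ∂(volume : Measure V3), DifferentiableAt ℝ φ x := hK.ae_differentiableAt
    refine ae_restrict_of_ae (hae.mono fun x hx => ?_)
    have h1 : gradm (fun y => P (φ y)) x = Pmat P (gradm φ x) := gradm_comp Pc hPc hx
    show f x (withCol ξα (gradm (fun y => P (φ y)) x)) ≤ _
    rw [h1, Pmat_withCol hP hξα]
    exact le_add_of_nonneg_right (hΦnn _ (frobNorm_nonneg _))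
  have hmemV : ∀ φ ∈ AdmSet t, (fun y => P (φ y)) ∈ AdmVSet t V := by
    intro φ hφ
    obtain ⟨⟨K, hK⟩, hbd⟩ := hφ
    refine ⟨⟨⟨_, Pc.lipschitz.comp hK⟩, ?_⟩, fun x => hP.2.1 _⟩
    intro x hx
    show P (φ x) = 0
    rw [hbd x hx]
    exact hP.1.map_zero
  apply le_antisymm
  · unfold cellInf
    refine le_csInf hS2ne ?_
    rintro b ⟨φ, hφ, rfl⟩
    calc sInf ((fun φ => cellE f ξα t φ) '' AdmVSet t V)
        ≤ cellE f ξα t (fun y => P (φ y)) := csInf_le hbdd1 ⟨_, hmemV φ hφ, rfl⟩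
      _ ≤ cellE (fbar Φ P f) ξα t φ := hkey φ hφ
  · unfold cellInf
    exact csInf_le_csInf hbdd2 hS1ne hsub
end
end

section
/- Let Φ be a Young function of class Δ₂ ∩ ∇₂ and let f: ℝ³ × ℝ^{3×3} → ℝ be a Carathéodory function satisfying (H1) and (H2). Then for every linear subspace V ⊆ ℝ³ and every ξ_α ∈ V², the constrained tangentially homogenized density coincides with the homogenized density of the penalized unconstrained integrand: Tf⁰hom(V, ξ_α) = f̄⁰hom(V, ξ_α). -/
open MeasureTheory Filter

noncomputable section

/-! ### Auxiliary lemmas -/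

section AuxStmt1

lemma young_zero {Φ : ℝ → ℝ} (hΦ : IsYoung Φ) : Φ 0 = 0 := by
  obtain ⟨hc, -, -, h0, -⟩ := hΦ
  have h2 : Tendsto (fun t : ℝ => Φ t / t * t) (nhdsWithin (0:ℝ) (Set.Ioi 0)) (nhds 0) := by
    have := h0.mul (tendsto_id.mono_right (nhdsWithin_le_nhds (s := Set.Ioi (0:ℝ))))
    simpa using this
  have h1 : Tendsto Φ (nhdsWithin (0:ℝ) (Set.Ioi 0)) (nhds 0) := by
    refine h2.congr' ?_
    filter_upwards [self_mem_nhdsWithin] with t ht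
    exact div_mul_cancel₀ (Φ t) (ne_of_gt ht)
  have h3 : Tendsto Φ (nhdsWithin (0:ℝ) (Set.Ioi 0)) (nhds (Φ 0)) :=
    (hc 0 (Set.mem_Ici.2 le_rfl)).mono_left (nhdsWithin_mono 0 Set.Ioi_subset_Ici_self)
  exact tendsto_nhds_unique h3 h1

lemma young_nonneg {Φ : ℝ → ℝ} (hΦ : IsYoung Φ) {t : ℝ} (ht : 0 ≤ t) : 0 ≤ Φ t := by
  rcases ht.eq_or_lt with h | h
  · rw [← h, young_zero hΦ]
  · exact (hΦ.2.2.1 t h).le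

lemma frobNorm_nonneg {m n : ℕ} (ξ : Matrix (Fin m) (Fin n) ℝ) : 0 ≤ frobNorm ξ :=
  Real.sqrt_nonneg _

lemma frob3_le {ξ : M33} {M : ℝ} (hM : 0 ≤ M) (h : ∀ i j, |ξ i j| ≤ M) :
    frobNorm ξ ≤ 3 * M := by
  have hsq : ∀ i j, (ξ i j) ^ 2 ≤ M ^ 2 := fun i j => by
    have := h i j
    nlinarith [abs_nonneg (ξ i j), sq_abs (ξ i j)]
  have h1 : ∑ i, ∑ j, (ξ i j) ^ 2 ≤ (3 * M) ^ 2 := by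
    have hrow : ∀ i : Fin 3, ∑ j, (ξ i j) ^ 2 ≤ 3 * M ^ 2 := fun i => by
      calc ∑ j, (ξ i j) ^ 2 ≤ ∑ _j : Fin 3, M ^ 2 := Finset.sum_le_sum fun j _ => hsq i j
        _ = 3 * M ^ 2 := by simp [Finset.sum_const, Fintype.card_fin]; try ring
    calc ∑ i, ∑ j, (ξ i j) ^ 2 ≤ ∑ _i : Fin 3, 3 * M ^ 2 := Finset.sum_le_sum fun i _ => hrow i
      _ = (3 * M) ^ 2 := by simp [Finset.sum_const, Fintype.card_fin]; try ring
  calc frobNorm ξ ≤ Real.sqrt ((3 * M) ^ 2) := Real.sqrt_le_sqrt h1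
    _ = 3 * M := Real.sqrt_sq (by linarith)

lemma gradm_entry_le {φ : V3 → V3} {K : NNReal} (hφ : LipschitzWith K φ) (x : V3)
    (i j : Fin 3) : |gradm φ x i j| ≤ K := by
  have h1 : ‖fderiv ℝ φ x‖ ≤ K := norm_fderiv_le_of_lipschitz ℝ hφ
  have h2 : ‖(Pi.single j 1 : V3)‖ ≤ 1 := by
    rw [pi_norm_le_iff_of_nonneg zero_le_one]
    intro k
    rcases eq_or_ne k j with rfl | hk
    · simp
    · simp [Pi.single_apply, hk]
  have h3 : |gradm φ x i j| = ‖(fderiv ℝ φ x (Pi.single j 1)) i‖ := by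
    rw [Real.norm_eq_abs]; rfl
  calc |gradm φ x i j| = ‖(fderiv ℝ φ x (Pi.single j 1)) i‖ := h3
    _ ≤ ‖fderiv ℝ φ x (Pi.single j 1)‖ := norm_le_pi_norm _ i
    _ ≤ ‖fderiv ℝ φ x‖ * ‖(Pi.single j 1 : V3)‖ := (fderiv ℝ φ x).le_opNorm _
    _ ≤ K * 1 := mul_le_mul h1 h2 (norm_nonneg _) K.coe_nonneg
    _ = K := mul_one _

end AuxStmt1

/-- `Tf⁰hom(V, ξ_α) = f̄⁰hom(V, ξ_α)`. -/
theorem stmt_1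
    (Φ : ℝ → ℝ) (hΦ : IsYoung Φ) (hΔ : Delta2 Φ) (hΝ : Nabla2 Φ)
    (f : V3 → M33 → ℝ) (hf : Caratheodory f) (hf1 : H1per f)
    (α β : ℝ) (hα : 0 < α) (hαβ : α ≤ β) (hf2 : H2growth Φ α β f)
    (V : Submodule ℝ V3) (P : V3 → V3) (hP : IsOrthProjOnto V P)
    (ξα : M32) (hξα : colsIn V ξα) :
    Tf0hom f V ξα = homDens (fbar Φ P f) ξα := by
  obtain ⟨hfm, hfc⟩ := hf
  obtain ⟨hPlin, hPV, hPid, -⟩ := hP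
  have hΦ0 : Φ 0 = 0 := young_zero hΦ
  have hΦnn : ∀ s : ℝ, 0 ≤ s → 0 ≤ Φ s := fun s hs => young_nonneg hΦ hs
  -- the projection as a continuous linear map
  set C : V3 →L[ℝ] V3 := LinearMap.toContinuousLinearMap (IsLinearMap.mk' P hPlin) with hCdef
  have hCP : ∀ y, C y = P y := fun y => by
    simp [hCdef, LinearMap.coe_toContinuousLinearMap', IsLinearMap.mk'_apply]
  have hP0 : P 0 = 0 := hPlin.map_zero
  -- the truncated Young function, continuous on all of ℝ
  set Ψ : ℝ → ℝ := fun s => Φ (max s 0) with hΨdef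
  have hΨcont : Continuous Ψ :=
    hΦ.1.comp_continuous (continuous_id.max continuous_const) fun s => Set.mem_Ici.2 (le_max_right _ _)
  have hΨeq : ∀ s : ℝ, 0 ≤ s → Ψ s = Φ s := fun s hs => by
    simp [hΨdef, max_eq_left hs]
  -- `Pmat` commutes with `withCol` (since the columns of `ξα` lie in `V`)
  have hPW : ∀ A : M33, Pmat P (withCol ξα A) = withCol ξα (Pmat P A) := by
    intro A
    funext i j
    show P (fun k => withCol ξα A k j) i
        = (if h : (j : ℕ) < 2 then ξα i ⟨(j : ℕ), h⟩ else 0) + P (fun k => A k j) i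
    have hsplit : (fun k => withCol ξα A k j)
        = (fun k => (if h : (j : ℕ) < 2 then ξα k ⟨(j : ℕ), h⟩ else 0)) + (fun k => A k j) :=
      rfl
    rw [hsplit, hPlin.map_add]
    by_cases h : (j : ℕ) < 2
    · have h1 : (fun k => (if h' : (j : ℕ) < 2 then ξα k ⟨(j : ℕ), h'⟩ else 0))
          = fun k => ξα k ⟨(j : ℕ), h⟩ := by
        funext k; rw [dif_pos h]
      rw [h1, hPid _ (hξα ⟨(j : ℕ), h⟩), dif_pos h]
      rfl
    · have h1 : (fun k => (if h' : (j : ℕ) < 2 then ξα k ⟨(j : ℕ), h'⟩ else 0)) = (0 : V3) := by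
        funext k; rw [dif_neg h]; rfl
      rw [h1, hP0, dif_neg h]
      show ((0 : V3) + P (fun k => A k j)) i = 0 + P (fun k => A k j) i
      rfl
  -- `P` fixes all derivative values of `V`-valued maps
  have hfixcol : ∀ (ψ : V3 → V3), (∀ y, ψ y ∈ V) → ∀ (x : V3) (v : V3),
      P (fderiv ℝ ψ x v) = fderiv ℝ ψ x v := by
    intro ψ hval x v
    by_cases hd : DifferentiableAt ℝ ψ x
    · have hψP : ⇑C ∘ ψ = ψ := funext fun y => (hCP _).trans (hPid _ (hval y))
      have h1 : fderiv ℝ (⇑C ∘ ψ) x = C.comp (fderiv ℝ ψ x) := by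
        rw [fderiv_comp x C.differentiableAt hd, C.fderiv]
      rw [hψP] at h1
      conv_rhs => rw [h1]
      rw [ContinuousLinearMap.comp_apply, hCP]
    · rw [fderiv_zero_of_not_differentiableAt hd]
      show P ((0 : V3 →L[ℝ] V3) v) = (0 : V3 →L[ℝ] V3) v
      rw [ContinuousLinearMap.zero_apply, hP0]
  have hPmat_grad : ∀ (ψ : V3 → V3), (∀ y, ψ y ∈ V) → ∀ x,
      Pmat P (gradm ψ x) = gradm ψ x := by
    intro ψ hval x
    funext i j
    show P (fun k => gradm ψ x k j) i = gradm ψ x i j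
    have h1 : (fun k => gradm ψ x k j) = fderiv ℝ ψ x (Pi.single j 1) := rfl
    rw [h1, hfixcol ψ hval x]
    rfl
  -- pointwise identity of the two integrands on `V`-valued maps
  have hAval : ∀ (ψ : V3 → V3), (∀ y, ψ y ∈ V) → ∀ x,
      fbar Φ P f x (withCol ξα (gradm ψ x)) = f x (withCol ξα (gradm ψ x)) := by
    intro ψ hval x
    have h1 : Pmat P (withCol ξα (gradm ψ x)) = withCol ξα (gradm ψ x) := by
      rw [hPW, hPmat_grad ψ hval]
    show f x (Pmat P (withCol ξα (gradm ψ x)))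
        + Φ (frobNorm (withCol ξα (gradm ψ x) - Pmat P (withCol ξα (gradm ψ x)))) = _
    rw [h1, sub_self]
    have h2 : frobNorm (0 : M33) = 0 := by
      simp [frobNorm]
    rw [h2, hΦ0, add_zero]
  -- chain rule for the gradient matrix
  have hgradcomp : ∀ (φ' : V3 → V3) (x : V3), DifferentiableAt ℝ φ' x →
      gradm (P ∘ φ') x = Pmat P (gradm φ' x) := by
    intro φ' x hd
    funext i j
    show fderiv ℝ (P ∘ φ') x (Pi.single j 1) i = P (fun k => gradm φ' x k j) i
    have hPC : P ∘ φ' = ⇑C ∘ φ' := funext fun y => (hCP (φ' y)).symm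
    rw [hPC, fderiv_comp x C.differentiableAt hd, C.fderiv, ContinuousLinearMap.comp_apply,
      hCP]
    rfl
  -- measurability of composed integrands
  have hcompmeas : ∀ (M : V3 → M33), (∀ i j, Measurable fun x => M x i j) →
      Measurable fun x => f x (M x) := by
    intro M hM
    have hu : Measurable (Function.uncurry
        (fun (A : Fin 3 → Fin 3 → ℝ) (x : V3) => f x (Matrix.of A))) :=
      @measurable_uncurry_of_continuous_of_measurable _ _ _ _ TopologicalSpace.metrizableSpace_pi _
        inferInstance inferInstance _ _ inferInstance inferInstance _ _ (fun x => hfc x) (fun A => hfm _)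
    have heq : (fun x => f x (M x)) = (Function.uncurry
        (fun (A : Fin 3 → Fin 3 → ℝ) (x : V3) => f x (Matrix.of A)))
        ∘ (fun x => ((fun i j => M x i j), x)) := rfl
    rw [heq]
    exact hu.comp ((measurable_pi_lambda _ fun i =>
      measurable_pi_lambda _ fun j => hM i j).prodMk measurable_id)
  have hentW : ∀ (ψ : V3 → V3) (i j : Fin 3),
      Measurable fun x => withCol ξα (gradm ψ x) i j := by
    intro ψ i j
    show Measurable fun x =>
      (if h : (j : ℕ) < 2 then ξα i ⟨(j : ℕ), h⟩ else 0) + fderiv ℝ ψ x (Pi.single j 1) i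
    exact measurable_const.add
      ((measurable_pi_apply i).comp (measurable_fderiv_apply_const ℝ ψ (Pi.single j 1)))
  have hcolW : ∀ (ψ : V3 → V3) (j : Fin 3),
      Measurable fun x => (fun k => withCol ξα (gradm ψ x) k j) :=
    fun ψ j => measurable_pi_lambda _ fun k => hentW ψ k j
  have hentPW : ∀ (ψ : V3 → V3) (i j : Fin 3),
      Measurable fun x => Pmat P (withCol ξα (gradm ψ x)) i j := by
    intro ψ i j
    show Measurable fun x => P (fun k => withCol ξα (gradm ψ x) k j) i
    have hcont : Continuous fun v : V3 => P v i := by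
      have : (fun v : V3 => P v i) = fun v => C v i := by
        funext v; rw [hCP]
      rw [this]
      exact (continuous_apply i).comp C.continuous
    exact hcont.measurable.comp (hcolW ψ j)
  have hrmeas : ∀ ψ : V3 → V3, Measurable fun x =>
      frobNorm (withCol ξα (gradm ψ x) - Pmat P (withCol ξα (gradm ψ x))) := by
    intro ψ
    have hterm : ∀ i j : Fin 3, Measurable fun x =>
        ((withCol ξα (gradm ψ x) - Pmat P (withCol ξα (gradm ψ x))) i j) ^ 2 := by
      intro i j
      have h1 : (fun x => ((withCol ξα (gradm ψ x) - Pmat P (withCol ξα (gradm ψ x))) i j) ^ 2)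
          = fun x => (withCol ξα (gradm ψ x) i j - Pmat P (withCol ξα (gradm ψ x)) i j) ^ 2 := by
        funext x; rw [Matrix.sub_apply]
      have h2 : Measurable fun x =>
          withCol ξα (gradm ψ x) i j - Pmat P (withCol ξα (gradm ψ x)) i j :=
        (hentW ψ i j).sub (hentPW ψ i j)
      rw [h1]
      exact h2.pow_const 2
    show Measurable fun x => Real.sqrt
      (∑ i, ∑ j, ((withCol ξα (gradm ψ x) - Pmat P (withCol ξα (gradm ψ x))) i j) ^ 2)
    exact Real.continuous_sqrt.measurable.comp
      (Finset.measurable_sum _ fun i _ => Finset.measurable_sum _ fun j _ => hterm i j)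
  -- the key identity of cell infima, for every `t`
  have key : ∀ t : ℝ, cellInf f ξα t (AdmVSet t V) = cellInf (fbar Φ P f) ξα t (AdmSet t) := by
    intro t
    -- finiteness of the measure of the cylinder
    have hfin : volume (openCyl t) ≠ ⊤ := by
      have hsub : openCyl t ⊆ Metric.closedBall (0 : V3) (|t| + 1) := by
        intro x hx
        obtain ⟨h0, h1, h2⟩ := hx
        rw [Metric.mem_closedBall, dist_zero_right]
        rw [pi_norm_le_iff_of_nonneg (by positivity)]
        intro k
        have ht2 : t / 2 ≤ |t| + 1 := by
          have h3 := le_abs_self t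
          have h4 := abs_nonneg t
          linarith
        have h5 := abs_nonneg t
        rw [Real.norm_eq_abs]
        fin_cases k
        · exact le_trans h0.le ht2
        · exact le_trans h1.le ht2
        · exact le_trans h2.le (by linarith)
      exact ne_of_lt (lt_of_le_of_lt (measure_mono hsub) measure_closedBall_lt_top)
    -- nonnegativity of all cell energies
    have hnnf : ∀ φ : V3 → V3, 0 ≤ cellE f ξα t φ := by
      intro φ
      apply setIntegral_nonneg_of_ae
      filter_upwards [hf2] with x hx
      exact le_trans (mul_nonneg hα.le (hΦnn _ (frobNorm_nonneg _))) (hx _).1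
    have hnnfbar : ∀ φ : V3 → V3, 0 ≤ cellE (fbar Φ P f) ξα t φ := by
      intro φ
      apply setIntegral_nonneg_of_ae
      filter_upwards [hf2] with x hx
      have h1 := le_trans (mul_nonneg hα.le (hΦnn _ (frobNorm_nonneg _)))
        (hx (Pmat P (withCol ξα (gradm φ x)))).1
      exact add_nonneg h1 (hΦnn _ (frobNorm_nonneg _))
    -- sets of energies
    have h0V : (fun _ : V3 => (0 : V3)) ∈ AdmVSet t V :=
      ⟨⟨⟨0, LipschitzWith.const 0⟩, fun x _ => rfl⟩, fun x => V.zero_mem⟩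
    have hSne : ((fun φ => cellE f ξα t φ) '' AdmVSet t V).Nonempty := ⟨_, _, h0V, rfl⟩
    have hTne : ((fun φ => cellE (fbar Φ P f) ξα t φ) '' AdmSet t).Nonempty :=
      ⟨_, _, h0V.1, rfl⟩
    have hSbdd : BddBelow ((fun φ => cellE f ξα t φ) '' AdmVSet t V) := by
      refine ⟨0, ?_⟩
      rintro r ⟨φ, -, rfl⟩
      exact hnnf φ
    have hTbdd : BddBelow ((fun φ => cellE (fbar Φ P f) ξα t φ) '' AdmSet t) := by
      refine ⟨0, ?_⟩
      rintro r ⟨φ, -, rfl⟩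
      exact hnnfbar φ
    -- the energies agree on `V`-valued maps
    have hcellEq : ∀ φ : V3 → V3, (∀ y, φ y ∈ V) →
        cellE (fbar Φ P f) ξα t φ = cellE f ξα t φ := by
      intro φ hval
      exact integral_congr_ae (Eventually.of_forall fun x => hAval φ hval x)
    have hsub : ((fun φ => cellE f ξα t φ) '' AdmVSet t V)
        ⊆ ((fun φ => cellE (fbar Φ P f) ξα t φ) '' AdmSet t) := by
      rintro r ⟨φ, hφ, rfl⟩
      exact ⟨φ, hφ.1, hcellEq φ hφ.2⟩
    show sInf ((fun φ => cellE f ξα t φ) '' AdmVSet t V)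
        = sInf ((fun φ => cellE (fbar Φ P f) ξα t φ) '' AdmSet t)
    refine le_antisymm ?_ (csInf_le_csInf hTbdd hSne hsub)
    apply le_csInf hTne
    rintro r ⟨φ, hφ, rfl⟩
    obtain ⟨⟨K, hK⟩, hbd⟩ := hφ
    -- the projected competitor
    have hK' : LipschitzWith (‖C‖₊ * K) (P ∘ φ) := by
      have h1 := C.lipschitz.comp hK
      have h2 : ⇑C ∘ φ = P ∘ φ := funext fun y => hCP (φ y)
      rwa [h2] at h1
    have hmemV : (P ∘ φ) ∈ AdmVSet t V := by
      refine ⟨⟨⟨_, hK'⟩, fun x hx => ?_⟩, fun x => hPV _⟩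
      show P (φ x) = 0
      rw [hbd x hx, hP0]
    -- entry and Frobenius bounds
    set Sξ : ℝ := ∑ i, ∑ j, |ξα i j| with hSξdef
    have hSξnn : 0 ≤ Sξ :=
      Finset.sum_nonneg fun i _ => Finset.sum_nonneg fun j _ => abs_nonneg _
    have hent : ∀ (i : Fin 3) (j : Fin 2), |ξα i j| ≤ Sξ := by
      intro i j
      calc |ξα i j| ≤ ∑ j', |ξα i j'| :=
            Finset.single_le_sum (f := fun j' => |ξα i j'|)
              (fun _ _ => abs_nonneg _) (Finset.mem_univ j)
        _ ≤ Sξ := Finset.single_le_sum (f := fun i' => ∑ j', |ξα i' j'|)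
            (fun _ _ => Finset.sum_nonneg fun _ _ => abs_nonneg _) (Finset.mem_univ i)
    have hWent : ∀ (ψ : V3 → V3) (Kψ : NNReal), LipschitzWith Kψ ψ →
        ∀ (x : V3) (i j : Fin 3), |withCol ξα (gradm ψ x) i j| ≤ Sξ + Kψ := by
      intro ψ Kψ hψ x i j
      show |(if h : (j : ℕ) < 2 then ξα i ⟨(j : ℕ), h⟩ else 0) + gradm ψ x i j| ≤ _
      refine (abs_add_le _ _).trans (add_le_add ?_ (gradm_entry_le hψ x i j))
      split_ifs with h
      · exact hent i ⟨(j : ℕ), h⟩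
      · simpa using hSξnn
    have hPent : ∀ (ψ : V3 → V3) (Kψ : NNReal), LipschitzWith Kψ ψ →
        ∀ (x : V3) (i j : Fin 3),
        |Pmat P (withCol ξα (gradm ψ x)) i j| ≤ ‖C‖ * (Sξ + Kψ) := by
      intro ψ Kψ hψ x i j
      show |P (fun k => withCol ξα (gradm ψ x) k j) i| ≤ _
      have h1 : |P (fun k => withCol ξα (gradm ψ x) k j) i|
          = ‖(C (fun k => withCol ξα (gradm ψ x) k j)) i‖ := by
        rw [hCP, Real.norm_eq_abs]
      rw [h1]
      calc ‖(C (fun k => withCol ξα (gradm ψ x) k j)) i‖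
          ≤ ‖C (fun k => withCol ξα (gradm ψ x) k j)‖ := norm_le_pi_norm _ i
        _ ≤ ‖C‖ * ‖(fun k => withCol ξα (gradm ψ x) k j : V3)‖ := C.le_opNorm _
        _ ≤ ‖C‖ * (Sξ + Kψ) := by
            refine mul_le_mul_of_nonneg_left ?_ (norm_nonneg _)
            rw [pi_norm_le_iff_of_nonneg (by positivity)]
            intro k
            rw [Real.norm_eq_abs]
            exact hWent ψ Kψ hψ x k j
    set R : ℝ := 3 * (1 + ‖C‖) * (Sξ + K + (‖C‖₊ * K : NNReal) + 1) with hRdef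
    have hCnn : 0 ≤ ‖C‖ := norm_nonneg _
    have hKnn : 0 ≤ (K : ℝ) := K.coe_nonneg
    have hK'val : ((‖C‖₊ * K : NNReal) : ℝ) = ‖C‖ * K := by
      push_cast
      rfl
    have hK'nn : 0 ≤ ((‖C‖₊ * K : NNReal) : ℝ) := NNReal.coe_nonneg _
    have hRnn : 0 ≤ R := by positivity
    obtain ⟨CΦ, hCΦ⟩ := (isCompact_Icc : IsCompact (Set.Icc (0 : ℝ) R)).exists_bound_of_continuousOn
      (hΦ.1.mono (Set.Icc_subset_Ici_self))
    have hΦbnd : ∀ s : ℝ, 0 ≤ s → s ≤ R → Φ s ≤ CΦ := by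
      intro s h1 h2
      have := hCΦ s ⟨h1, h2⟩
      rw [Real.norm_eq_abs] at this
      exact (le_abs_self _).trans this
    have hCΦnn : 0 ≤ CΦ := le_trans (norm_nonneg _) (hCΦ 0 ⟨le_refl _, hRnn⟩)
    -- Frobenius bounds within `[0, R]`
    have hfrobW : ∀ x, frobNorm (withCol ξα (gradm φ x)) ≤ R := by
      intro x
      refine le_trans (frob3_le (by positivity) fun i j => hWent φ K hK x i j) ?_
      rw [hRdef]
      nlinarith [hK'nn]
    have hfrobWψ : ∀ x, frobNorm (withCol ξα (gradm (P ∘ φ) x)) ≤ R := by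
      intro x
      refine le_trans (frob3_le (by positivity) fun i j => hWent _ _ hK' x i j) ?_
      rw [hRdef]
      nlinarith [hK'nn]
    have hfrobPW : ∀ x, frobNorm (Pmat P (withCol ξα (gradm φ x))) ≤ R := by
      intro x
      refine le_trans (frob3_le (by positivity) fun i j => hPent φ K hK x i j) ?_
      rw [hRdef]
      nlinarith [hK'nn]
    have hfrobWmPW : ∀ x,
        frobNorm (withCol ξα (gradm φ x) - Pmat P (withCol ξα (gradm φ x))) ≤ R := by
      intro x
      have hentd : ∀ i j : Fin 3,
          |(withCol ξα (gradm φ x) - Pmat P (withCol ξα (gradm φ x))) i j|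
            ≤ (Sξ + K) + ‖C‖ * (Sξ + K) := by
        intro i j
        rw [Matrix.sub_apply]
        exact (abs_sub _ _).trans (add_le_add (hWent φ K hK x i j) (hPent φ K hK x i j))
      refine le_trans (frob3_le (by positivity) hentd) ?_
      rw [hRdef]
      nlinarith [hK'nn]
    -- integrability of both integrands
    have hInt1 : IntegrableOn (fun x => f x (withCol ξα (gradm (P ∘ φ) x)))
        (openCyl t) volume := by
      refine Measure.integrableOn_of_bounded (M := β * (1 + CΦ)) hfin
        ((hcompmeas _ (hentW (P ∘ φ))).aestronglyMeasurable) ?_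
      refine ae_restrict_of_ae ?_
      filter_upwards [hf2] with x hx
      have h1 := (hx (withCol ξα (gradm (P ∘ φ) x))).1
      have h2 := (hx (withCol ξα (gradm (P ∘ φ) x))).2
      have h3 : Φ (frobNorm (withCol ξα (gradm (P ∘ φ) x))) ≤ CΦ :=
        hΦbnd _ (frobNorm_nonneg _) (hfrobWψ x)
      have h4 : 0 ≤ f x (withCol ξα (gradm (P ∘ φ) x)) :=
        le_trans (mul_nonneg hα.le (hΦnn _ (frobNorm_nonneg _))) h1
      have hβ : 0 ≤ β := le_trans hα.le hαβ
      have h7 : β * (1 + Φ (frobNorm (withCol ξα (gradm (P ∘ φ) x)))) ≤ β * (1 + CΦ) :=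
        mul_le_mul_of_nonneg_left (by linarith) hβ
      rw [Real.norm_eq_abs, abs_le]
      constructor
      · have h8 : 0 ≤ β * (1 + CΦ) := mul_nonneg hβ (by linarith)
        linarith
      · linarith
    have hInt2 : IntegrableOn (fun x => fbar Φ P f x (withCol ξα (gradm φ x)))
        (openCyl t) volume := by
      have hmeas2 : Measurable fun x => fbar Φ P f x (withCol ξα (gradm φ x)) := by
        have heq : (fun x => fbar Φ P f x (withCol ξα (gradm φ x)))
            = fun x => f x (Pmat P (withCol ξα (gradm φ x)))
              + Ψ (frobNorm (withCol ξα (gradm φ x)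
                - Pmat P (withCol ξα (gradm φ x)))) := by
          funext x
          rw [hΨeq _ (frobNorm_nonneg _)]
          rfl
        rw [heq]
        exact (hcompmeas _ (hentPW φ)).add (hΨcont.measurable.comp (hrmeas φ))
      refine Measure.integrableOn_of_bounded (M := β * (1 + CΦ) + CΦ) hfin
        hmeas2.aestronglyMeasurable ?_
      refine ae_restrict_of_ae ?_
      filter_upwards [hf2] with x hx
      have h1 := (hx (Pmat P (withCol ξα (gradm φ x)))).1
      have h2 := (hx (Pmat P (withCol ξα (gradm φ x)))).2
      have h3 : Φ (frobNorm (Pmat P (withCol ξα (gradm φ x)))) ≤ CΦ :=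
        hΦbnd _ (frobNorm_nonneg _) (hfrobPW x)
      have h4 : 0 ≤ f x (Pmat P (withCol ξα (gradm φ x))) :=
        le_trans (mul_nonneg hα.le (hΦnn _ (frobNorm_nonneg _))) h1
      have h5 : Φ (frobNorm (withCol ξα (gradm φ x)
          - Pmat P (withCol ξα (gradm φ x)))) ≤ CΦ :=
        hΦbnd _ (frobNorm_nonneg _) (hfrobWmPW x)
      have h6 : 0 ≤ Φ (frobNorm (withCol ξα (gradm φ x)
          - Pmat P (withCol ξα (gradm φ x)))) := hΦnn _ (frobNorm_nonneg _)
      have hβ : 0 ≤ β := le_trans hα.le hαβ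
      have h7 : β * (1 + Φ (frobNorm (Pmat P (withCol ξα (gradm φ x))))) ≤ β * (1 + CΦ) :=
        mul_le_mul_of_nonneg_left (by linarith) hβ
      have h8 : 0 ≤ β * (1 + CΦ) := mul_nonneg hβ (by linarith)
      show ‖f x (Pmat P (withCol ξα (gradm φ x)))
          + Φ (frobNorm (withCol ξα (gradm φ x)
            - Pmat P (withCol ξα (gradm φ x))))‖ ≤ _
      rw [Real.norm_eq_abs, abs_le]
      constructor
      · linarith
      · linarith
    -- comparison of the energies
    have hle : cellE f ξα t (P ∘ φ) ≤ cellE (fbar Φ P f) ξα t φ := by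
      refine integral_mono_ae hInt1 hInt2 ?_
      refine ae_restrict_of_ae ?_
      filter_upwards [hK.ae_differentiableAt] with x hx
      have h1 : Pmat P (withCol ξα (gradm φ x)) = withCol ξα (gradm (P ∘ φ) x) := by
        rw [hPW, hgradcomp φ x hx]
      show f x (withCol ξα (gradm (P ∘ φ) x))
          ≤ f x (Pmat P (withCol ξα (gradm φ x)))
            + Φ (frobNorm (withCol ξα (gradm φ x)
              - Pmat P (withCol ξα (gradm φ x))))
      rw [h1]
      exact le_add_of_nonneg_right (hΦnn _ (frobNorm_nonneg _))
    exact le_trans (csInf_le hSbdd ⟨_, hmemV, rfl⟩) hle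
  show liminf (fun t : ℝ => (t ^ 2)⁻¹ * cellInf f ξα t (AdmVSet t V)) atTop
      = liminf (fun t : ℝ => (t ^ 2)⁻¹ * cellInf (fbar Φ P f) ξα t (AdmSet t)) atTop
  congr 1
  funext t
  rw [key t]
end
end

section
/- Let Φ be a Young function of class Δ₂ ∩ ∇₂ and let W: ℝ³ × ℝ^{3×3} → ℝ be a Carathéodory function, 1-periodic in the planar variable x_α, satisfying β'Φ(|ξ|) − 1/β' ≤ W(x,ξ) ≤ β(1+Φ(|ξ|)) for some 0<β'<β. Then for every ξ_α ∈ ℝ^{3×2} the limit lim_{t→+∞} t^{−2} · inf{ ∫_{(tQ')₁} W(x, (ξ_α+∇_αφ | ∇₃φ)) dx : φ ∈ 𝒜_t } exists and is a finite real number (i.e. the liminf and limsup over real t → +∞ of the scaled cell infima coincide). -/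
open MeasureTheory Filter

noncomputable section

/-! ### Auxiliary development -/

namespace Stmt2Aux

open Set

instance : MeasurableSpace M33 := inferInstanceAs (MeasurableSpace (Fin 3 → Fin 3 → ℝ))
instance : BorelSpace M33 := inferInstanceAs (BorelSpace (Fin 3 → Fin 3 → ℝ))
instance : SecondCountableTopology M33 :=
  inferInstanceAs (SecondCountableTopology (Fin 3 → Fin 3 → ℝ))
instance : TopologicalSpace.MetrizableSpace M33 :=
  inferInstanceAs (TopologicalSpace.MetrizableSpace (Fin 3 → Fin 3 → ℝ))

/-! #### Young function facts -/

theorem young_zero {Φ : ℝ → ℝ} (h : IsYoung Φ) : Φ 0 = 0 := by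
  have hc : ContinuousWithinAt Φ (Set.Ici 0) 0 := h.1 0 (by simp)
  have t1 : Tendsto Φ (nhdsWithin 0 (Set.Ioi (0:ℝ))) (nhds (Φ 0)) :=
    hc.tendsto.mono_left (nhdsWithin_mono 0 Set.Ioi_subset_Ici_self)
  have t2 : Tendsto Φ (nhdsWithin 0 (Set.Ioi (0:ℝ))) (nhds 0) := by
    have hmul : Tendsto (fun t => (Φ t / t) * t) (nhdsWithin 0 (Set.Ioi (0:ℝ))) (nhds 0) := by
      have h2 : Tendsto (fun t : ℝ => t) (nhdsWithin 0 (Set.Ioi (0:ℝ))) (nhds 0) :=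
        tendsto_id.mono_left nhdsWithin_le_nhds
      simpa using h.2.2.2.1.mul h2
    apply hmul.congr'
    filter_upwards [self_mem_nhdsWithin] with t ht
    exact div_mul_cancel₀ (Φ t) (ne_of_gt ht)
  exact tendsto_nhds_unique t1 t2

theorem young_nonneg {Φ : ℝ → ℝ} (h : IsYoung Φ) {r : ℝ} (hr : 0 ≤ r) : 0 ≤ Φ r := by
  rcases hr.lt_or_eq with h' | h'
  · exact le_of_lt (h.2.2.1 r h')
  · rw [← h', young_zero h]

theorem young_bddAbove {Φ : ℝ → ℝ} (h : IsYoung Φ) (R : ℝ) :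
    ∃ M : ℝ, 0 ≤ M ∧ ∀ r : ℝ, 0 ≤ r → r ≤ R → Φ r ≤ M := by
  set R' := max R 0 with hR'
  have hcont : ContinuousOn Φ (Set.Icc 0 R') := h.1.mono Set.Icc_subset_Ici_self
  obtain ⟨C, hC⟩ := isCompact_Icc.exists_bound_of_continuousOn hcont
  refine ⟨max C 0, le_max_right _ _, fun r h0 hR => ?_⟩
  have : ‖Φ r‖ ≤ C := hC r ⟨h0, le_trans hR (le_max_left _ _)⟩
  calc Φ r ≤ ‖Φ r‖ := le_abs_self _
    _ ≤ C := this
    _ ≤ max C 0 := le_max_left _ _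

/-! #### Frobenius norm facts -/

theorem frobNorm_nonneg {m n : ℕ} (ξ : Matrix (Fin m) (Fin n) ℝ) : 0 ≤ frobNorm ξ :=
  Real.sqrt_nonneg _

theorem entry_le_frobNorm {m n : ℕ} (ξ : Matrix (Fin m) (Fin n) ℝ) (i : Fin m) (j : Fin n) :
    |ξ i j| ≤ frobNorm ξ := by
  rw [← Real.sqrt_sq_eq_abs]
  apply Real.sqrt_le_sqrt
  calc (ξ i j)^2 ≤ ∑ j', (ξ i j')^2 := by
        apply Finset.single_le_sum (f := fun j' => (ξ i j')^2) (fun _ _ => sq_nonneg _)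
          (Finset.mem_univ j)
    _ ≤ ∑ i', ∑ j', (ξ i' j')^2 := by
        apply Finset.single_le_sum (f := fun i' => ∑ j', (ξ i' j')^2)
          (fun _ _ => Finset.sum_nonneg fun _ _ => sq_nonneg _) (Finset.mem_univ i)

theorem frobNorm_le33 {A : M33} {a : ℝ} (ha : 0 ≤ a) (h : ∀ i j, |A i j| ≤ a) :
    frobNorm A ≤ 3 * a := by
  have hsum : (∑ i, ∑ j, (A i j)^2) ≤ ∑ _i : Fin 3, ∑ _j : Fin 3, a^2 := by
    apply Finset.sum_le_sum; intro i _
    apply Finset.sum_le_sum; intro j _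
    calc (A i j)^2 = |A i j|^2 := (sq_abs _).symm
      _ ≤ a^2 := by apply pow_le_pow_left₀ (abs_nonneg _) (h i j)
  have h9 : (∑ _i : Fin 3, ∑ _j : Fin 3, a^2) = (3*a)^2 := by
    simp [Finset.sum_const]; ring
  calc frobNorm A ≤ Real.sqrt ((3*a)^2) := by
        rw [← h9]; exact Real.sqrt_le_sqrt hsum
    _ = 3*a := Real.sqrt_sq (by linarith)

end Stmt2Aux
namespace Stmt2Aux

open Set

/-! #### Gradient matrix facts -/

theorem gradm_entry_le {K : NNReal} {φ : V3 → V3} (h : LipschitzWith K φ) (x : V3)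
    (i j : Fin 3) : |gradm φ x i j| ≤ K := by
  have h1 : ‖fderiv ℝ φ x‖ ≤ K :=
    norm_fderiv_le_of_lipschitzOn ℝ Filter.univ_mem (h.lipschitzOnWith)
  have h2 : |fderiv ℝ φ x (Pi.single j 1) i| ≤ ‖fderiv ℝ φ x (Pi.single j 1)‖ := by
    rw [← Real.norm_eq_abs]; exact norm_le_pi_norm _ i
  have h3 := (fderiv ℝ φ x).le_opNorm ((Pi.single j (1:ℝ) : V3))
  have h4 : ‖(Pi.single j (1:ℝ) : V3)‖ = 1 := by rw [Pi.norm_single]; simp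
  rw [h4, mul_one] at h3
  have h5 : |gradm φ x i j| = |fderiv ℝ φ x (Pi.single j 1) i| := rfl
  rw [h5]
  exact le_trans h2 (le_trans h3 h1)

theorem gradm_congr_nhds {f g : V3 → V3} {x : V3} (h : f =ᶠ[nhds x] g) :
    gradm f x = gradm g x := by
  unfold gradm; rw [h.fderiv_eq]

theorem gradm_congr_isOpen {f g : V3 → V3} {U : Set V3} (hU : IsOpen U) {x : V3} (hx : x ∈ U)
    (h : Set.EqOn f g U) : gradm f x = gradm g x :=
  gradm_congr_nhds (Filter.eventuallyEq_of_mem (hU.mem_nhds hx) h)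

theorem gradm_zero (x : V3) : gradm (fun _ => (0:V3)) x = 0 := by
  ext i j
  simp [gradm, fderiv_const]

theorem gradm_translate (φ : V3 → V3) (c x : V3) :
    gradm (fun y => φ (y - c)) x = gradm φ (x - c) := by
  have key : fderiv ℝ (fun y => φ (y - c)) x = fderiv ℝ φ (x - c) := by
    by_cases h : DifferentiableAt ℝ φ (x - c)
    · have h1 : HasFDerivAt (fun y : V3 => y - c) (ContinuousLinearMap.id ℝ V3) x :=
        (hasFDerivAt_id x).sub_const c
      have h2 : HasFDerivAt (fun y => φ (y - c))
          ((fderiv ℝ φ (x - c)).comp (ContinuousLinearMap.id ℝ V3)) x :=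
        h.hasFDerivAt.comp x h1
      rw [h2.fderiv, ContinuousLinearMap.comp_id]
    · have h' : ¬ DifferentiableAt ℝ (fun y => φ (y - c)) x := by
        intro hd
        apply h
        have h1 : DifferentiableAt ℝ (fun y : V3 => y + c) (x - c) :=
          (differentiableAt_id).add_const c
        have hd' : DifferentiableAt ℝ (fun y => φ (y - c)) ((x - c) + c) := by
          rwa [sub_add_cancel]
        have := hd'.comp (x - c) h1
        have heq : ((fun y => φ (y - c)) ∘ fun y : V3 => y + c) = φ := by
          funext y; simp [Function.comp, add_sub_cancel_right]
        rwa [heq] at this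
      rw [fderiv_zero_of_not_differentiableAt h, fderiv_zero_of_not_differentiableAt h']
  unfold gradm; rw [key]

/-! #### Clamp and cell maps -/

def clampR (lo hi x : ℝ) : ℝ := min (max x lo) hi

theorem clampR_lip (lo hi : ℝ) : LipschitzWith 1 (clampR lo hi) :=
  (LipschitzWith.id.max_const lo).min_const hi

theorem clampR_eq_self {lo hi x : ℝ} (h1 : lo ≤ x) (h2 : x ≤ hi) : clampR lo hi x = x := by
  unfold clampR; rw [max_eq_left h1, min_eq_left h2]

theorem clampR_mem {lo hi : ℝ} (h : lo ≤ hi) (x : ℝ) :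
    lo ≤ clampR lo hi x ∧ clampR lo hi x ≤ hi := by
  unfold clampR
  constructor
  · exact le_min (le_max_right _ _) h
  · exact min_le_right _ _

theorem clampR_of_le {lo hi x : ℝ} (h : x ≤ lo) (h' : lo ≤ hi) : clampR lo hi x = lo := by
  unfold clampR; rw [max_eq_right h, min_eq_left h']

theorem clampR_of_ge {lo hi x : ℝ} (h : hi ≤ x) (h' : lo ≤ hi) : clampR lo hi x = hi := by
  unfold clampR
  rw [min_eq_right]
  exact le_max_of_le_left h

/-- clamp map onto the closed cell centered at `c` (in the planar variables) and
the slab `[-1/2,1/2]` in the third variable. -/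
def cellMap (s : ℝ) (c : V3) (x : V3) : V3 := fun i =>
  if (i : ℕ) < 2 then clampR (c i - s/2) (c i + s/2) (x i) else clampR (-(1/2)) (1/2) (x i)

theorem cellMap_lip (s : ℝ) (c : V3) : LipschitzWith 1 (cellMap s c) := by
  rw [lipschitzWith_iff_dist_le_mul]
  intro x y
  rw [NNReal.coe_one, one_mul]
  apply (dist_pi_le_iff dist_nonneg).2
  intro b
  have hb : ∀ lo hi, dist (clampR lo hi (x b)) (clampR lo hi (y b)) ≤ dist x y := by
    intro lo hi
    calc dist (clampR lo hi (x b)) (clampR lo hi (y b)) ≤ 1 * dist (x b) (y b) := by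
          simpa using (clampR_lip lo hi).dist_le_mul (x b) (y b)
      _ = dist (x b) (y b) := one_mul _
      _ ≤ dist x y := dist_le_pi_dist x y b
  by_cases h2 : (b : ℕ) < 2 <;> simp only [cellMap, h2, if_true, if_false] <;> apply hb

def inCell (s : ℝ) (c : V3) : Set V3 :=
  {x | |x 0 - c 0| < s/2 ∧ |x 1 - c 1| < s/2 ∧ |x 2| < 1/2}

theorem isOpen_inCell (s : ℝ) (c : V3) : IsOpen (inCell s c) := by
  have h0 : IsOpen {x : V3 | |x 0 - c 0| < s/2} :=
    isOpen_lt (((continuous_apply (0 : Fin 3)).sub continuous_const).abs) continuous_const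
  have h1 : IsOpen {x : V3 | |x 1 - c 1| < s/2} :=
    isOpen_lt (((continuous_apply (1 : Fin 3)).sub continuous_const).abs) continuous_const
  have h2 : IsOpen {x : V3 | |x 2| < 1/2} :=
    isOpen_lt ((continuous_apply (2 : Fin 3)).abs) continuous_const
  exact (h0.inter (h1.inter h2) : _)

theorem isOpen_openCyl (t : ℝ) : IsOpen (openCyl t) := by
  have h0 : IsOpen {x : V3 | |x 0| < t/2} :=
    isOpen_lt ((continuous_apply (0 : Fin 3)).abs) continuous_const
  have h1 : IsOpen {x : V3 | |x 1| < t/2} :=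
    isOpen_lt ((continuous_apply (1 : Fin 3)).abs) continuous_const
  have h2 : IsOpen {x : V3 | |x 2| < 1/2} :=
    isOpen_lt ((continuous_apply (2 : Fin 3)).abs) continuous_const
  exact (h0.inter (h1.inter h2) : _)

theorem inCell_zero (s : ℝ) : inCell s 0 = openCyl s := by
  ext x; simp [inCell, openCyl]

theorem preimage_add_inCell {s : ℝ} {c : V3} (hc2 : c 2 = 0) :
    (fun y : V3 => y + c) ⁻¹' inCell s c = openCyl s := by
  ext y
  simp only [inCell, openCyl, Set.mem_preimage, Set.mem_setOf_eq, Pi.add_apply]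
  rw [hc2]
  constructor
  · rintro ⟨a, b, c'⟩
    refine ⟨by simpa using a, by simpa using b, by simpa using c'⟩
  · rintro ⟨a, b, c'⟩
    refine ⟨by simpa using a, by simpa using b, by simpa using c'⟩

end Stmt2Aux
namespace Stmt2Aux

open Set

/-! #### Vanishing on the closed lateral boundary -/

theorem adm_vanish_closed {s : ℝ} {φ : V3 → V3} (hφ : φ ∈ AdmSet s) {y : V3}
    (h1 : max |y 0| |y 1| = s / 2) (h2 : |y 2| ≤ 1/2) : φ y = 0 := by
  obtain ⟨⟨K, hK⟩, h0⟩ := hφ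
  set z : ℕ → V3 := fun n => Function.update y 2 ((1 - 1/((n:ℝ)+1)) * y 2) with hz
  have key : ∀ n, z n ∈ latBdry s := by
    intro n
    have e0 : z n 0 = y 0 := Function.update_of_ne (by decide) _ _
    have e1 : z n 1 = y 1 := Function.update_of_ne (by decide) _ _
    have e2 : z n 2 = (1 - 1/((n:ℝ)+1)) * y 2 := Function.update_self _ _ _
    have hn1 : 0 < 1/((n:ℝ)+1) := by positivity
    have hn2 : 1/((n:ℝ)+1) ≤ 1 := by
      rw [div_le_one (by positivity)]; linarith [Nat.cast_nonneg (α := ℝ) n]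
    constructor
    · rw [e0, e1]; exact h1
    · rw [e2, abs_mul, abs_of_nonneg (by linarith : (0:ℝ) ≤ 1 - 1/((n:ℝ)+1))]
      calc (1 - 1/((n:ℝ)+1)) * |y 2| ≤ (1 - 1/((n:ℝ)+1)) * (1/2) := by
            apply mul_le_mul_of_nonneg_left h2 (by linarith)
        _ < 1/2 := by nlinarith
  have hφz : ∀ n, φ (z n) = 0 := fun n => h0 _ (key n)
  have hz_tendsto : Filter.Tendsto z Filter.atTop (nhds y) := by
    apply tendsto_pi_nhds.2
    intro i
    by_cases hi : i = 2
    · subst hi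
      have : ∀ n, z n 2 = (1 - 1/((n:ℝ)+1)) * y 2 := fun n => Function.update_self _ _ _
      simp only [this]
      have hlim : Filter.Tendsto (fun n : ℕ => (1 - 1/((n:ℝ)+1)) * y 2) Filter.atTop
          (nhds ((1 - 0) * y 2)) :=
        (tendsto_const_nhds.sub tendsto_one_div_add_atTop_nhds_zero_nat).mul_const _
      simpa using hlim
    · have : ∀ n, z n i = y i := fun n => Function.update_of_ne hi _ _
      simp only [this]
      exact tendsto_const_nhds
  have hcont := (hK.continuous.tendsto y).comp hz_tendsto
  have : Filter.Tendsto (fun _ : ℕ => (0 : V3)) Filter.atTop (nhds (φ y)) := by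
    have heq : (φ ∘ z) = fun _ : ℕ => (0 : V3) := by funext n; simp [Function.comp, hφz n]
    rwa [heq] at hcont
  exact (tendsto_nhds_unique this tendsto_const_nhds)

/-! #### Patch functions -/

def patch (s : ℝ) (c : V3) (φ : V3 → V3) (x : V3) : V3 := φ (cellMap s c x - c)

theorem patch_lip {K : NNReal} {φ : V3 → V3} (h : LipschitzWith K φ) (s : ℝ) (c : V3) :
    LipschitzWith K (patch s c φ) := by
  have h1 : LipschitzWith 1 (fun x => cellMap s c x - c) := by
    rw [lipschitzWith_iff_dist_le_mul]
    intro x y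
    rw [dist_sub_right]
    exact (lipschitzWith_iff_dist_le_mul.1 (cellMap_lip s c)) x y
  have := h.comp h1
  rw [mul_one] at this
  exact this

theorem patch_eq_of_mem {s : ℝ} {c : V3} {φ : V3 → V3} {x : V3} (hx : x ∈ inCell s c) :
    patch s c φ x = φ (x - c) := by
  obtain ⟨hx0, hx1, hx2⟩ := hx
  have hmap : cellMap s c x = x := by
    funext i
    unfold cellMap
    by_cases hi : (i : ℕ) < 2
    · rw [if_pos hi]
      have h' : |x i - c i| < s/2 := by
        fin_cases i
        · exact hx0
        · exact hx1
        · simp at hi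
      obtain ⟨a, b⟩ := abs_lt.1 h' 
      exact clampR_eq_self (by linarith) (by linarith)
    · rw [if_neg hi]
      have hi2 : i = 2 := by omega
      subst hi2
      obtain ⟨a, b⟩ := abs_lt.1 hx2
      exact clampR_eq_self (by linarith) (by linarith)
  rw [patch, hmap]

theorem patch_eq_zero_outside {s : ℝ} (hs : 0 < s) {c : V3} (hc2 : c 2 = 0) {φ : V3 → V3}
    (hφ : φ ∈ AdmSet s) {x : V3} (hx : s/2 ≤ |x 0 - c 0| ∨ s/2 ≤ |x 1 - c 1|) :
    patch s c φ x = 0 := by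
  set y := cellMap s c x - c with hy
  have hs2 : 0 ≤ s/2 := by linarith
  -- bounds on clamped coordinates
  have hbound : ∀ i : Fin 3, (i:ℕ) < 2 → |y i| ≤ s/2 := by
    intro i hi
    have : y i = clampR (c i - s/2) (c i + s/2) (x i) - c i := by
      simp [hy, cellMap, hi]
    rw [this]
    obtain ⟨a, b⟩ := clampR_mem (by linarith : c i - s/2 ≤ c i + s/2) (x i)
    rw [abs_le]; constructor <;> linarith
  have hexact : ∀ i : Fin 3, (i:ℕ) < 2 → s/2 ≤ |x i - c i| → |y i| = s/2 := by
    intro i hi hxi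
    have hrep : y i = clampR (c i - s/2) (c i + s/2) (x i) - c i := by
      simp [hy, cellMap, hi]
    rcases le_abs.1 hxi with h' | h'
    · have : clampR (c i - s/2) (c i + s/2) (x i) = c i + s/2 :=
        clampR_of_ge (by linarith) (by linarith)
      rw [hrep, this]; rw [abs_of_nonneg (by linarith)]; ring
    · have : clampR (c i - s/2) (c i + s/2) (x i) = c i - s/2 :=
        clampR_of_le (by linarith) (by linarith)
      rw [hrep, this]
      rw [abs_of_nonpos (by linarith)]; ring
  have hmax : max |y 0| |y 1| = s / 2 := by
    rcases hx with h' | h'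
    · have e0 : |y 0| = s/2 := hexact 0 (by norm_num) h'
      have e1 : |y 1| ≤ s/2 := hbound 1 (by norm_num)
      rw [e0]; exact max_eq_left (by rw [e0] at *; linarith)
    · have e1 : |y 1| = s/2 := hexact 1 (by norm_num) h'
      have e0 : |y 0| ≤ s/2 := hbound 0 (by norm_num)
      rw [e1]; exact max_eq_right (by rw [e1] at *; linarith)
  have h2 : |y 2| ≤ 1/2 := by
    have : y 2 = clampR (-(1/2)) (1/2) (x 2) - c 2 := by
      simp [hy, cellMap]
    rw [this, hc2, sub_zero]
    obtain ⟨a, b⟩ := clampR_mem (by norm_num : -(1/2:ℝ) ≤ 1/2) (x 2)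
    rw [abs_le]; exact ⟨a, b⟩
  exact adm_vanish_closed hφ hmax h2

/-! #### Sums of Lipschitz functions -/

theorem lipschitzWith_finset_sum {ι : Type*} (C : Finset ι) (f : ι → V3 → V3) (K : NNReal)
    (h : ∀ c ∈ C, LipschitzWith K (f c)) :
    LipschitzWith (C.card * K) (fun x => ∑ c ∈ C, f c x) := by
  classical
  induction C using Finset.induction_on with
  | empty => simpa using (LipschitzWith.const (0 : V3))
  | @insert a C ha ih =>
    have h1 : LipschitzWith K (f a) := h a (Finset.mem_insert_self a C)
    have h2 : LipschitzWith (C.card * K) (fun x => ∑ c ∈ C, f c x) :=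
      ih (fun c hc => h c (Finset.mem_insert_of_mem hc))
    have h3 : LipschitzWith (K + C.card * K) (fun x => f a x + ∑ c ∈ C, f c x) := h1.add h2
    have hcard : ((insert a C).card : NNReal) * K = K + C.card * K := by
      rw [Finset.card_insert_of_notMem ha]
      push_cast
      ring
    rw [hcard]
    simp only [Finset.sum_insert ha]
    exact h3

end Stmt2Aux
namespace Stmt2Aux

open Set MeasureTheory

/-! #### Volume computations -/

theorem openCyl_eq_pi (t : ℝ) :
    openCyl t = Set.univ.pi
      (fun i : Fin 3 => if (i:ℕ) < 2 then Set.Ioo (-(t/2)) (t/2) else Set.Ioo (-(1/2)) (1/2)) := by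
  ext x
  simp only [openCyl, Set.mem_setOf_eq, Set.mem_pi, Set.mem_univ, forall_true_left]
  constructor
  · rintro ⟨h0, h1, h2⟩ i
    fin_cases i
    · simpa [abs_lt] using h0
    · simpa [abs_lt] using h1
    · simpa [abs_lt] using h2
  · intro h
    have h0 := h 0; have h1 := h 1; have h2 := h 2
    simp only [show ((0:Fin 3):ℕ) < 2 by norm_num, show ((1:Fin 3):ℕ) < 2 by norm_num,
      show ¬((2:Fin 3):ℕ) < 2 by norm_num, if_true, if_false] at h0 h1 h2
    exact ⟨abs_lt.2 ⟨by simpa using h0.1, h0.2⟩, abs_lt.2 ⟨by simpa using h1.1, h1.2⟩,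
      abs_lt.2 ⟨by simpa using h2.1, h2.2⟩⟩

theorem volume_openCyl {t : ℝ} (ht : 0 ≤ t) : volume (openCyl t) = ENNReal.ofReal (t^2) := by
  rw [openCyl_eq_pi, volume_pi_pi, Fin.prod_univ_three]
  norm_num
  rw [← ENNReal.ofReal_mul ht]
  congr 1
  ring

theorem measurableSet_openCyl (t : ℝ) : MeasurableSet (openCyl t) :=
  (isOpen_openCyl t).measurableSet

theorem volume_openCyl_ne_top {t : ℝ} (ht : 0 ≤ t) : volume (openCyl t) ≠ ⊤ := by
  rw [volume_openCyl ht]; exact ENNReal.ofReal_ne_top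

theorem hyperplane_null (i : Fin 3) (v : ℝ) : volume {x : V3 | x i = v} = 0 := by
  have hsub : {x : V3 | x i = v} ⊆ Set.univ.pi (fun j => if j = i then {v} else Set.univ) := by
    intro x hx j _
    by_cases hj : j = i
    · subst hj; simpa using hx
    · simp [hj]
  apply measure_mono_null hsub
  rw [volume_pi_pi]
  apply Finset.prod_eq_zero (Finset.mem_univ i)
  simp

theorem volume_inCell {s : ℝ} (hs : 0 ≤ s) {c : V3} (hc2 : c 2 = 0) :
    volume (inCell s c) = ENNReal.ofReal (s^2) := by
  have h1 := (measurePreserving_add_right (volume : Measure V3) c).measure_preimage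
    ((isOpen_inCell s c).measurableSet.nullMeasurableSet)
  rw [preimage_add_inCell hc2] at h1
  rw [← h1, volume_openCyl hs]

/-! #### Integrand: measurability and bounds -/

/-- The energy integrand. -/
def EF (W : V3 → M33 → ℝ) (ξα : M32) (φ : V3 → V3) (x : V3) : ℝ :=
  W x (withCol ξα (gradm φ x))

theorem cellE_eq (W : V3 → M33 → ℝ) (ξα : M32) (t : ℝ) (φ : V3 → V3) :
    cellE W ξα t φ = ∫ x in openCyl t, EF W ξα φ x := rfl

theorem EF_measurable {W : V3 → M33 → ℝ} (hW : Caratheodory W) (ξα : M32) (φ : V3 → V3) :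
    Measurable (EF W ξα φ) := by
  have hG : Measurable fun x => withCol ξα (gradm φ x) := by
    apply measurable_pi_lambda
    intro i
    apply measurable_pi_lambda
    intro j
    have h1 : Measurable fun x => fderiv ℝ φ x (Pi.single j 1) i :=
      (measurable_pi_apply i).comp (measurable_fderiv_apply_const ℝ φ (Pi.single j (1:ℝ)))
    have heq : (fun x => withCol ξα (gradm φ x) i j) =
        fun x => (if h : (j : ℕ) < 2 then ξα i ⟨(j : ℕ), h⟩ else 0)
          + fderiv ℝ φ x (Pi.single j 1) i := rfl
    rw [heq]
    exact h1.const_add _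
  have hu : Measurable (Function.uncurry fun (ξ : M33) (x : V3) => W x ξ) :=
    MeasureTheory.measurable_uncurry_of_continuous_of_measurable
      (fun x => hW.2 x) (fun ξ => hW.1 ξ)
  exact hu.comp (hG.prodMk measurable_id)

theorem withCol_frob_le (ξα : M32) {A : M33} {a : ℝ} (ha : 0 ≤ a) (hA : ∀ i j, |A i j| ≤ a) :
    frobNorm (withCol ξα A) ≤ 3 * (frobNorm ξα + a) := by
  apply frobNorm_le33 (by linarith [frobNorm_nonneg ξα])
  intro i j
  have h1 : |(if h : (j : ℕ) < 2 then ξα i ⟨(j : ℕ), h⟩ else 0)| ≤ frobNorm ξα := by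
    by_cases hj : (j : ℕ) < 2
    · rw [dif_pos hj]; exact entry_le_frobNorm ξα i _
    · rw [dif_neg hj]; simpa using frobNorm_nonneg ξα
  have : withCol ξα A i j = (if h : (j : ℕ) < 2 then ξα i ⟨(j : ℕ), h⟩ else 0) + A i j := rfl
  rw [this]
  calc |(if h : (j : ℕ) < 2 then ξα i ⟨(j : ℕ), h⟩ else 0) + A i j|
      ≤ |(if h : (j : ℕ) < 2 then ξα i ⟨(j : ℕ), h⟩ else 0)| + |A i j| := abs_add_le _ _
    _ ≤ frobNorm ξα + a := add_le_add h1 (hA i j)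

section Bounds

variable {Φ : ℝ → ℝ} {W : V3 → M33 → ℝ} {β' β : ℝ} (ξα : M32)

theorem EF_lower (hΦ : IsYoung Φ) (hβ' : 0 < β')
    (hWg : ∀ x ξ, β' * Φ (frobNorm ξ) - 1 / β' ≤ W x ξ ∧ W x ξ ≤ β * (1 + Φ (frobNorm ξ)))
    (φ : V3 → V3) (x : V3) : -(1/β') ≤ EF W ξα φ x := by
  have h1 := (hWg x (withCol ξα (gradm φ x))).1
  have h2 : 0 ≤ Φ (frobNorm (withCol ξα (gradm φ x))) :=
    young_nonneg hΦ (frobNorm_nonneg _)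
  have h3 : 0 ≤ β' * Φ (frobNorm (withCol ξα (gradm φ x))) := by positivity
  unfold EF; linarith

theorem EF_bound (hΦ : IsYoung Φ) (hβ' : 0 < β') (hβ : 0 < β)
    (hWg : ∀ x ξ, β' * Φ (frobNorm ξ) - 1 / β' ≤ W x ξ ∧ W x ξ ≤ β * (1 + Φ (frobNorm ξ)))
    {K : NNReal} {φ : V3 → V3} (hφ : LipschitzWith K φ) :
    ∃ Cb : ℝ, 0 ≤ Cb ∧ ∀ x, |EF W ξα φ x| ≤ Cb := by
  set R : ℝ := 3 * (frobNorm ξα + K) with hR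
  obtain ⟨M, hM0, hM⟩ := young_bddAbove hΦ R
  refine ⟨max (β * (1 + M)) (1/β'), le_trans (by positivity) (le_max_right _ _), fun x => ?_⟩
  have hfrob : frobNorm (withCol ξα (gradm φ x)) ≤ R :=
    withCol_frob_le ξα (NNReal.coe_nonneg K) (fun i j => gradm_entry_le hφ x i j)
  have hΦle : Φ (frobNorm (withCol ξα (gradm φ x))) ≤ M :=
    hM _ (frobNorm_nonneg _) hfrob
  have hup := (hWg x (withCol ξα (gradm φ x))).2
  have hlo := EF_lower ξα hΦ hβ' hWg φ x
  rw [abs_le]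
  constructor
  · have : -(max (β * (1 + M)) (1/β')) ≤ -(1/β') := by
      simp only [neg_le_neg_iff]; exact le_max_right _ _
    linarith
  · have h2 : EF W ξα φ x ≤ β * (1 + M) := by
      unfold EF
      calc W x (withCol ξα (gradm φ x)) ≤ β * (1 + Φ (frobNorm (withCol ξα (gradm φ x)))) := hup
        _ ≤ β * (1 + M) := by nlinarith
    exact le_trans h2 (le_max_left _ _)

theorem EF_integrableOn (hΦ : IsYoung Φ) (hβ' : 0 < β') (hβ : 0 < β) (hW : Caratheodory W)
    (hWg : ∀ x ξ, β' * Φ (frobNorm ξ) - 1 / β' ≤ W x ξ ∧ W x ξ ≤ β * (1 + Φ (frobNorm ξ)))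
    {K : NNReal} {φ : V3 → V3} (hφ : LipschitzWith K φ) {S : Set V3} (hS : volume S ≠ ⊤) :
    IntegrableOn (EF W ξα φ) S := by
  obtain ⟨Cb, _, hCb⟩ := EF_bound ξα hΦ hβ' hβ hWg hφ
  apply Measure.integrableOn_of_bounded hS (EF_measurable hW ξα φ).aestronglyMeasurable
  exact Filter.Eventually.of_forall (fun x => by rw [Real.norm_eq_abs]; exact hCb x)

end Bounds

end Stmt2Aux
namespace Stmt2Aux

open Set MeasureTheory

/-- The zero-deformation energy-density constant. -/
def C0 (Φ : ℝ → ℝ) (β : ℝ) (ξα : M32) : ℝ := β * (1 + Φ (frobNorm (withCol ξα 0)))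

section CellBounds

variable {Φ : ℝ → ℝ} {W : V3 → M33 → ℝ} {β' β : ℝ} (ξα : M32)

theorem C0_nonneg (hΦ : IsYoung Φ) (hβ : 0 < β) : 0 ≤ C0 Φ β ξα := by
  have := young_nonneg hΦ (frobNorm_nonneg (withCol ξα 0))
  unfold C0; positivity

theorem zero_mem_AdmSet (t : ℝ) : (fun _ : V3 => (0:V3)) ∈ AdmSet t :=
  ⟨⟨0, LipschitzWith.const 0⟩, fun _ _ => rfl⟩

theorem cellE_zero_le (hΦ : IsYoung Φ) (hβ' : 0 < β') (hβ : 0 < β) (hW : Caratheodory W)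
    (hWg : ∀ x ξ, β' * Φ (frobNorm ξ) - 1 / β' ≤ W x ξ ∧ W x ξ ≤ β * (1 + Φ (frobNorm ξ)))
    {t : ℝ} (ht : 0 < t) :
    cellE W ξα t (fun _ : V3 => (0:V3)) ≤ C0 Φ β ξα * t^2 := by
  rw [cellE_eq]
  have hint : IntegrableOn (EF W ξα (fun _ : V3 => (0:V3))) (openCyl t) :=
    EF_integrableOn ξα hΦ hβ' hβ hW hWg (LipschitzWith.const 0) (volume_openCyl_ne_top ht.le)
  have hconst : IntegrableOn (fun _ : V3 => C0 Φ β ξα) (openCyl t) := by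
    exact integrableOn_const (by rw [volume_openCyl ht.le]; exact ENNReal.ofReal_ne_top)
  have hle : ∀ x ∈ openCyl t, EF W ξα (fun _ : V3 => (0:V3)) x ≤ C0 Φ β ξα := by
    intro x _
    have : EF W ξα (fun _ : V3 => (0:V3)) x = W x (withCol ξα 0) := by
      unfold EF; rw [gradm_zero]
    rw [this]
    exact (hWg x (withCol ξα 0)).2
  calc (∫ x in openCyl t, EF W ξα (fun _ : V3 => (0:V3)) x)
      ≤ ∫ _x in openCyl t, C0 Φ β ξα :=
        setIntegral_mono_on hint hconst (measurableSet_openCyl t) hle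
    _ = (volume (openCyl t)).toReal • C0 Φ β ξα := setIntegral_const _
    _ = C0 Φ β ξα * t^2 := by
        rw [volume_openCyl ht.le, ENNReal.toReal_ofReal (by positivity), smul_eq_mul]
        ring

theorem cellE_ge (hΦ : IsYoung Φ) (hβ' : 0 < β') (hβ : 0 < β) (hW : Caratheodory W)
    (hWg : ∀ x ξ, β' * Φ (frobNorm ξ) - 1 / β' ≤ W x ξ ∧ W x ξ ≤ β * (1 + Φ (frobNorm ξ)))
    {t : ℝ} (ht : 0 < t) {φ : V3 → V3} (hφ : φ ∈ AdmSet t) :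
    -(1/β') * t^2 ≤ cellE W ξα t φ := by
  obtain ⟨K, hK⟩ := hφ.1
  rw [cellE_eq]
  have hint : IntegrableOn (EF W ξα φ) (openCyl t) :=
    EF_integrableOn ξα hΦ hβ' hβ hW hWg hK (volume_openCyl_ne_top ht.le)
  have hconst : IntegrableOn (fun _ : V3 => -(1/β')) (openCyl t) := by
    exact integrableOn_const (by rw [volume_openCyl ht.le]; exact ENNReal.ofReal_ne_top)
  calc -(1/β') * t^2 = (volume (openCyl t)).toReal • (-(1/β')) := by
        rw [volume_openCyl ht.le, ENNReal.toReal_ofReal (by positivity), smul_eq_mul]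
        ring
    _ = ∫ _x in openCyl t, -(1/β') := (setIntegral_const _).symm
    _ ≤ ∫ x in openCyl t, EF W ξα φ x :=
        setIntegral_mono_on hconst hint (measurableSet_openCyl t)
          (fun x _ => EF_lower ξα hΦ hβ' hWg φ x)

theorem cell_image_nonempty (W : V3 → M33 → ℝ) (t : ℝ) :
    ((fun φ => cellE W ξα t φ) '' AdmSet t).Nonempty :=
  ⟨cellE W ξα t (fun _ : V3 => (0:V3)), ⟨_, zero_mem_AdmSet t, rfl⟩⟩

theorem cell_image_bddBelow (hΦ : IsYoung Φ) (hβ' : 0 < β') (hβ : 0 < β) (hW : Caratheodory W)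
    (hWg : ∀ x ξ, β' * Φ (frobNorm ξ) - 1 / β' ≤ W x ξ ∧ W x ξ ≤ β * (1 + Φ (frobNorm ξ)))
    {t : ℝ} (ht : 0 < t) :
    BddBelow ((fun φ => cellE W ξα t φ) '' AdmSet t) := by
  refine ⟨-(1/β') * t^2, ?_⟩
  rintro y ⟨φ, hφ, rfl⟩
  exact cellE_ge ξα hΦ hβ' hβ hW hWg ht hφ

theorem cellInf_le_cellE (hΦ : IsYoung Φ) (hβ' : 0 < β') (hβ : 0 < β) (hW : Caratheodory W)
    (hWg : ∀ x ξ, β' * Φ (frobNorm ξ) - 1 / β' ≤ W x ξ ∧ W x ξ ≤ β * (1 + Φ (frobNorm ξ)))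
    {t : ℝ} (ht : 0 < t) {φ : V3 → V3} (hφ : φ ∈ AdmSet t) :
    cellInf W ξα t (AdmSet t) ≤ cellE W ξα t φ :=
  csInf_le (cell_image_bddBelow ξα hΦ hβ' hβ hW hWg ht) ⟨φ, hφ, rfl⟩

theorem cellInf_ge (hΦ : IsYoung Φ) (hβ' : 0 < β') (hβ : 0 < β) (hW : Caratheodory W)
    (hWg : ∀ x ξ, β' * Φ (frobNorm ξ) - 1 / β' ≤ W x ξ ∧ W x ξ ≤ β * (1 + Φ (frobNorm ξ)))
    {t : ℝ} (ht : 0 < t) :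
    -(1/β') * t^2 ≤ cellInf W ξα t (AdmSet t) := by
  apply le_csInf (cell_image_nonempty ξα W t)
  rintro y ⟨φ, hφ, rfl⟩
  exact cellE_ge ξα hΦ hβ' hβ hW hWg ht hφ

theorem cellInf_le_C0 (hΦ : IsYoung Φ) (hβ' : 0 < β') (hβ : 0 < β) (hW : Caratheodory W)
    (hWg : ∀ x ξ, β' * Φ (frobNorm ξ) - 1 / β' ≤ W x ξ ∧ W x ξ ≤ β * (1 + Φ (frobNorm ξ)))
    {t : ℝ} (ht : 0 < t) :
    cellInf W ξα t (AdmSet t) ≤ C0 Φ β ξα * t^2 :=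
  le_trans (cellInf_le_cellE ξα hΦ hβ' hβ hW hWg ht (zero_mem_AdmSet t))
    (cellE_zero_le ξα hΦ hβ' hβ hW hWg ht)

theorem exists_near_optimal (hΦ : IsYoung Φ) (hβ' : 0 < β') (hβ : 0 < β) (hW : Caratheodory W)
    (hWg : ∀ x ξ, β' * Φ (frobNorm ξ) - 1 / β' ≤ W x ξ ∧ W x ξ ≤ β * (1 + Φ (frobNorm ξ)))
    {t : ℝ} (ht : 0 < t) {ε : ℝ} (hε : 0 < ε) :
    ∃ φ ∈ AdmSet t, cellE W ξα t φ ≤ cellInf W ξα t (AdmSet t) + ε := by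
  have h := (csInf_lt_iff (cell_image_bddBelow ξα hΦ hβ' hβ hW hWg ht)
      (cell_image_nonempty ξα W t)).1
    (show sInf ((fun φ => cellE W ξα t φ) '' AdmSet t) < cellInf W ξα t (AdmSet t) + ε by
      unfold cellInf; linarith)
  obtain ⟨y, ⟨φ, hφ, rfl⟩, hy⟩ := h
  exact ⟨φ, hφ, le_of_lt hy⟩

end CellBounds

end Stmt2Aux
namespace Stmt2Aux

open Set MeasureTheory

theorem master
    {Φ : ℝ → ℝ} {W : V3 → M33 → ℝ} {β' β : ℝ} (ξα : M32)
    (hΦ : IsYoung Φ) (hβ' : 0 < β') (hβ : 0 < β) (hW : Caratheodory W)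
    (hWg : ∀ x ξ, β' * Φ (frobNorm ξ) - 1 / β' ≤ W x ξ ∧ W x ξ ≤ β * (1 + Φ (frobNorm ξ)))
    {s t : ℝ} (hs : 0 < s) (ht : 0 < t)
    {φ : V3 → V3} (hφ : φ ∈ AdmSet s)
    (C : Finset V3)
    (hc2 : ∀ c ∈ C, c 2 = 0)
    (hsep : ∀ c ∈ C, ∀ c' ∈ C, c ≠ c' → s ≤ max |c 0 - c' 0| |c 1 - c' 1|)
    (hsub : ∀ c ∈ C, inCell s c ⊆ openCyl t)
    (hper : ∀ c ∈ C, ∀ x ξ, W (x + c) ξ = W x ξ) :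
    cellInf W ξα t (AdmSet t) ≤ C.card * cellE W ξα s φ
      + C0 Φ β ξα * (t^2 - C.card * s^2) := by
  classical
  obtain ⟨K, hK⟩ := hφ.1
  set ψ : V3 → V3 := fun x => ∑ c ∈ C, patch s c φ x with hψdef
  have hψK : LipschitzWith (C.card * K) ψ :=
    lipschitzWith_finset_sum C _ K (fun c _ => patch_lip hK s c)
  -- ψ vanishes wherever x is (weakly) outside every cell
  have hout : ∀ x : V3, (∀ c ∈ C, s/2 ≤ |x 0 - c 0| ∨ s/2 ≤ |x 1 - c 1|) → ψ x = 0 := by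
    intro x h
    apply Finset.sum_eq_zero
    intro c hc
    exact patch_eq_zero_outside hs (hc2 c hc) hφ (h c hc)
  -- ψ is admissible for the large cylinder
  have hψadm : ψ ∈ AdmSet t := by
    refine ⟨⟨_, hψK⟩, fun x hx => ?_⟩
    obtain ⟨hmax, hx2⟩ := hx
    apply hout
    intro c hc
    by_contra hcon
    push_neg at hcon
    obtain ⟨h0, h1⟩ := hcon
    have hxin : x ∈ inCell s c := ⟨h0, h1, hx2⟩
    have hxcyl := hsub c hc hxin
    obtain ⟨hc0, hc1, _⟩ := hxcyl
    have : max |x 0| |x 1| < t / 2 := max_lt hc0 hc1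
    rw [hmax] at this
    exact lt_irrefl _ this
  -- in-cell identity
  have hin : ∀ c ∈ C, ∀ y ∈ inCell s c, ψ y = φ (y - c) := by
    intro c hc y hy
    have hmain : patch s c φ y = φ (y - c) := patch_eq_of_mem hy
    have hrest : ∀ c' ∈ C, c' ≠ c → patch s c' φ y = 0 := by
      intro c' hc' hne
      apply patch_eq_zero_outside hs (hc2 c' hc') hφ
      have hsepcc := hsep c' hc' c hc hne
      rcases le_max_iff.1 hsepcc with h' | h'
      · left
        have htri : |c' 0 - c 0| ≤ |c' 0 - y 0| + |y 0 - c 0| := abs_sub_le _ _ _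
        have : s/2 < |c' 0 - y 0| := by
          have := hy.1
          linarith
        rw [abs_sub_comm] at this
        linarith
      · right
        have htri : |c' 1 - c 1| ≤ |c' 1 - y 1| + |y 1 - c 1| := abs_sub_le _ _ _
        have : s/2 < |c' 1 - y 1| := by
          have := hy.2.1
          linarith
        rw [abs_sub_comm] at this
        linarith
    calc ψ y = ∑ c' ∈ C, patch s c' φ y := rfl
      _ = patch s c φ y := Finset.sum_eq_single_of_mem c hc (fun c' hc' h => hrest c' hc' h)
      _ = φ (y - c) := hmain
  -- pairwise disjointness of the cells
  have hdisj : (C : Set V3).Pairwise (Function.onFun Disjoint (fun c => inCell s c)) := by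
    intro c hc c' hc' hne
    rw [Function.onFun, Set.disjoint_left]
    intro x hxc hxc'
    have h0 : |c 0 - c' 0| < s := by
      have := hxc.1
      have := hxc'.1
      have htri : |c 0 - c' 0| ≤ |c 0 - x 0| + |x 0 - c' 0| := abs_sub_le _ _ _
      rw [abs_sub_comm (c 0) (x 0)] at htri
      linarith
    have h1 : |c 1 - c' 1| < s := by
      have := hxc.2.1
      have := hxc'.2.1
      have htri : |c 1 - c' 1| ≤ |c 1 - x 1| + |x 1 - c' 1| := abs_sub_le _ _ _
      rw [abs_sub_comm (c 1) (x 1)] at htri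
      linarith
    have := hsep c hc c' hc' hne
    rcases le_max_iff.1 this with h' | h' <;> linarith
  -- the outer region
  set R : Set V3 := openCyl t ∩ ⋂ c ∈ C, {x : V3 | s/2 < |x 0 - c 0| ∨ s/2 < |x 1 - c 1|}
    with hRdef
  have hRopen : IsOpen R := by
    apply (isOpen_openCyl t).inter
    apply isOpen_biInter_finset
    intro c _
    have ho1 : IsOpen {x : V3 | s/2 < |x 0 - c 0|} :=
      isOpen_lt continuous_const (((continuous_apply (0 : Fin 3)).sub continuous_const).abs)
    have ho2 : IsOpen {x : V3 | s/2 < |x 1 - c 1|} :=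
      isOpen_lt continuous_const (((continuous_apply (1 : Fin 3)).sub continuous_const).abs)
    have : {x : V3 | s/2 < |x 0 - c 0| ∨ s/2 < |x 1 - c 1|} =
        {x : V3 | s/2 < |x 0 - c 0|} ∪ {x : V3 | s/2 < |x 1 - c 1|} := rfl
    rw [this]
    exact ho1.union ho2
  have hψR : Set.EqOn ψ (fun _ => (0:V3)) R := by
    intro x hx
    apply hout
    intro c hc
    have := hx.2
    rw [Set.mem_iInter₂] at this
    rcases this c hc with h' | h'
    · exact Or.inl (le_of_lt h')
    · exact Or.inr (le_of_lt h')
  have hEFR : ∀ x ∈ R, EF W ξα ψ x = W x (withCol ξα 0) := by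
    intro x hx
    unfold EF
    rw [gradm_congr_isOpen hRopen hx hψR, gradm_zero]
  have hEFcell : ∀ c ∈ C, ∀ x ∈ inCell s c,
      EF W ξα ψ x = W x (withCol ξα (gradm φ (x - c))) := by
    intro c hc x hx
    unfold EF
    rw [gradm_congr_isOpen (isOpen_inCell s c) hx (fun y hy => hin c hc y hy),
      gradm_translate]
  -- measurability and integrability
  have hUms : ∀ c : V3, MeasurableSet (inCell s c) := fun c => (isOpen_inCell s c).measurableSet
  have hRms : MeasurableSet R := hRopen.measurableSet
  have hRsub : R ⊆ openCyl t := Set.inter_subset_left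
  have hintT : IntegrableOn (EF W ξα ψ) (openCyl t) :=
    EF_integrableOn ξα hΦ hβ' hβ hW hWg hψK (volume_openCyl_ne_top ht.le)
  have hintU : ∀ c ∈ C, IntegrableOn (EF W ξα ψ) (inCell s c) :=
    fun c hc => hintT.mono_set (hsub c hc)
  have hintR : IntegrableOn (EF W ξα ψ) R := hintT.mono_set hRsub
  -- the union E
  set E : Set V3 := (⋃ c ∈ C, inCell s c) ∪ R with hEdef
  have hEsub : E ⊆ openCyl t := by
    apply Set.union_subset _ hRsub
    exact Set.iUnion₂_subset hsub
  have hdisjUR : Disjoint (⋃ c ∈ C, inCell s c) R := by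
    rw [Set.disjoint_left]
    intro x hxU hxR
    rw [Set.mem_iUnion₂] at hxU
    obtain ⟨c, hc, hxc⟩ := hxU
    have := hxR.2
    rw [Set.mem_iInter₂] at this
    rcases this c hc with h' | h'
    · exact absurd hxc.1 (not_lt.2 (le_of_lt h'))
    · exact absurd hxc.2.1 (not_lt.2 (le_of_lt h'))
  -- null complement
  have hdiff_null : volume (openCyl t \ E) = 0 := by
    set N : Set V3 := ⋃ c ∈ C, ({x : V3 | x 0 = c 0 - s/2} ∪ {x : V3 | x 0 = c 0 + s/2}
      ∪ {x : V3 | x 1 = c 1 - s/2} ∪ {x : V3 | x 1 = c 1 + s/2}) with hNdef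
    have hNnull : volume N = 0 := by
      rw [hNdef]
      apply (measure_biUnion_null_iff C.countable_toSet).2
      intro c _
      rw [measure_union_null_iff]
      constructor
      · rw [measure_union_null_iff]
        constructor
        · rw [measure_union_null_iff]
          exact ⟨hyperplane_null 0 _, hyperplane_null 0 _⟩
        · exact hyperplane_null 1 _
      · exact hyperplane_null 1 _
    apply measure_mono_null _ hNnull
    intro x hx
    obtain ⟨hxt, hxE⟩ := hx
    have hxU : x ∉ ⋃ c ∈ C, inCell s c := fun h => hxE (Or.inl h)
    have hxR : x ∉ R := fun h => hxE (Or.inr h)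
    have hclose : ∃ c ∈ C, |x 0 - c 0| ≤ s/2 ∧ |x 1 - c 1| ≤ s/2 := by
      by_contra hcon
      push_neg at hcon
      apply hxR
      refine ⟨hxt, ?_⟩
      rw [Set.mem_iInter₂]
      intro c hc
      rcases (hcon c hc) with h'
      by_cases h0 : |x 0 - c 0| ≤ s/2
      · exact Or.inr (h' h0)
      · exact Or.inl (lt_of_not_ge h0)
    obtain ⟨c, hc, hcl0, hcl1⟩ := hclose
    have hnotin : x ∉ inCell s c := by
      intro h
      apply hxU
      rw [Set.mem_iUnion₂]
      exact ⟨c, hc, h⟩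
    have hx2 : |x 2| < 1/2 := hxt.2.2
    have heq : |x 0 - c 0| = s/2 ∨ |x 1 - c 1| = s/2 := by
      by_contra hcon
      push_neg at hcon
      exact hnotin ⟨lt_of_le_of_ne hcl0 hcon.1, lt_of_le_of_ne hcl1 hcon.2, hx2⟩
    rw [Set.mem_iUnion₂]
    refine ⟨c, hc, ?_⟩
    rcases heq with h' | h'
    · rcases abs_eq (by linarith : (0:ℝ) ≤ s/2) |>.1 h' with h'' | h''
      · left; left; right
        show x 0 = c 0 + s/2
        linarith
      · left; left; left
        show x 0 = c 0 - s/2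
        linarith
    · rcases abs_eq (by linarith : (0:ℝ) ≤ s/2) |>.1 h' with h'' | h''
      · right
        show x 1 = c 1 + s/2
        linarith
      · left; right
        show x 1 = c 1 - s/2
        linarith
  have hEae : openCyl t =ᵐ[volume] E := by
    rw [MeasureTheory.ae_eq_set]
    refine ⟨hdiff_null, ?_⟩
    rw [Set.diff_eq_empty.mpr hEsub]
    exact measure_empty
  -- integral decomposition
  have hstep1 : cellE W ξα t ψ = (∑ c ∈ C, ∫ x in inCell s c, EF W ξα ψ x)
      + ∫ x in R, EF W ξα ψ x := by
    rw [cellE_eq, setIntegral_congr_set hEae, hEdef,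
      setIntegral_union hdisjUR hRms ((integrableOn_finset_iUnion).2 hintU) hintR,
      integral_biUnion_finset C (fun c _ => hUms c) hdisj hintU]
  -- each cell integral equals the small-cell energy
  have hcellint : ∀ c ∈ C, (∫ x in inCell s c, EF W ξα ψ x) = cellE W ξα s φ := by
    intro c hc
    rw [setIntegral_congr_fun (hUms c) (fun x hx => hEFcell c hc x hx)]
    have hmp := measurePreserving_add_right (volume : Measure V3) c
    have hme : MeasurableEmbedding (fun y : V3 => y + c) :=
      (Homeomorph.addRight c).measurableEmbedding
    have hkey := hmp.setIntegral_preimage_emb hme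
      (fun x => W x (withCol ξα (gradm φ (x - c)))) (inCell s c)
    rw [preimage_add_inCell (hc2 c hc)] at hkey
    rw [← hkey, cellE_eq]
    apply setIntegral_congr_fun (measurableSet_openCyl s)
    intro x _
    show W (x + c) (withCol ξα (gradm φ (x + c - c))) = EF W ξα φ x
    rw [add_sub_cancel_right, hper c hc x _]
    rfl
  -- R-integral bound
  have hRfin : volume R ≠ ⊤ :=
    ne_top_of_le_ne_top (volume_openCyl_ne_top ht.le) (measure_mono hRsub)
  have hRbound : (∫ x in R, EF W ξα ψ x) ≤ C0 Φ β ξα * (volume R).toReal := by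
    have hconst : IntegrableOn (fun _ : V3 => C0 Φ β ξα) R :=
      integrableOn_const hRfin
    calc (∫ x in R, EF W ξα ψ x) ≤ ∫ _x in R, C0 Φ β ξα := by
          apply setIntegral_mono_on hintR hconst hRms
          intro x hx
          rw [hEFR x hx]
          exact (hWg x (withCol ξα 0)).2
      _ = (volume R).toReal • C0 Φ β ξα := setIntegral_const _
      _ = C0 Φ β ξα * (volume R).toReal := by rw [smul_eq_mul]; ring
  -- volume identity
  have hvol : (volume R).toReal = t^2 - C.card * s^2 := by
    have hvolE : volume E = ENNReal.ofReal (t^2) := by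
      rw [← measure_congr hEae, volume_openCyl ht.le]
    have hvolU : volume (⋃ c ∈ C, inCell s c) = (C.card : ENNReal) * ENNReal.ofReal (s^2) := by
      rw [measure_biUnion_finset hdisj (fun c _ => hUms c)]
      rw [Finset.sum_congr rfl (fun c hc => volume_inCell hs.le (hc2 c hc)),
        Finset.sum_const, nsmul_eq_mul]
    have hsum : ENNReal.ofReal (t^2) = (C.card : ENNReal) * ENNReal.ofReal (s^2) + volume R := by
      rw [← hvolE, hEdef, measure_union hdisjUR hRms, hvolU]
    have hfin1 : (C.card : ENNReal) * ENNReal.ofReal (s^2) ≠ ⊤ :=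
      ENNReal.mul_ne_top (ENNReal.natCast_ne_top _) ENNReal.ofReal_ne_top
    have h1 : ((C.card : ENNReal) * ENNReal.ofReal (s^2)).toReal = C.card * s^2 := by
      rw [ENNReal.toReal_mul, ENNReal.toReal_ofReal (by positivity : (0:ℝ) ≤ s^2)]
      simp
    have hcongr := congrArg ENNReal.toReal hsum
    rw [ENNReal.toReal_ofReal (by positivity : (0:ℝ) ≤ t^2),
      ENNReal.toReal_add hfin1 hRfin, h1] at hcongr
    linarith
  -- conclude
  have hψE : cellE W ξα t ψ ≤ C.card * cellE W ξα s φ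
      + C0 Φ β ξα * (t^2 - C.card * s^2) := by
    calc cellE W ξα t ψ = (∑ _c ∈ C, cellE W ξα s φ) + ∫ x in R, EF W ξα ψ x := by
          rw [hstep1]
          congr 1
          exact Finset.sum_congr rfl hcellint
      _ = C.card * cellE W ξα s φ + ∫ x in R, EF W ξα ψ x := by
          rw [Finset.sum_const, nsmul_eq_mul]
      _ ≤ C.card * cellE W ξα s φ + C0 Φ β ξα * (volume R).toReal := by linarith [hRbound]
      _ = C.card * cellE W ξα s φ + C0 Φ β ξα * (t^2 - C.card * s^2) := by rw [hvol]
  exact le_trans (cellInf_le_cellE ξα hΦ hβ' hβ hW hWg ht hψadm) hψE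

end Stmt2Aux
namespace Stmt2Aux

open Set MeasureTheory

/-! #### Integer periodicity -/

theorem per_single {W : V3 → M33 → ℝ} (hWper : H1per W) (i : Fin 3) (hi : (i:ℕ) < 2) :
    ∀ a : ℤ, ∀ (x : V3) (ξ : M33), W (x + (a:ℝ) • (Pi.single i 1 : V3)) ξ = W x ξ := by
  intro a
  induction a using Int.induction_on with
  | zero => intro x ξ; simp
  | succ k ih =>
    intro x ξ
    have heq2 : x + (((k:ℤ)+1 : ℤ):ℝ) • ((Pi.single i 1 : V3)) =
        (x + ((k:ℤ):ℝ) • (Pi.single i 1 : V3)) + Pi.single i 1 := by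
      funext l
      simp only [Pi.add_apply, Pi.smul_apply, smul_eq_mul]
      push_cast
      ring
    rw [heq2, hWper _ _ i hi, ih]
  | pred k ih =>
    intro x ξ
    have heq : (x + ((-(k:ℤ)-1 : ℤ):ℝ) • (Pi.single i 1 : V3)) + Pi.single i 1 =
        x + ((-(k:ℤ) : ℤ):ℝ) • (Pi.single i 1 : V3) := by
      funext l
      simp only [Pi.add_apply, Pi.smul_apply, smul_eq_mul]
      push_cast
      ring
    have h1 := hWper (x + ((-(k:ℤ)-1 : ℤ):ℝ) • (Pi.single i 1 : V3)) ξ i hi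
    rw [heq] at h1
    rw [← h1, ih]

def intVec (a b : ℝ) : V3 := fun l => if l = 0 then a else if l = 1 then b else 0

theorem intVec_decomp (a b : ℝ) :
    intVec a b = a • (Pi.single (0 : Fin 3) 1 : V3) + b • (Pi.single (1 : Fin 3) 1 : V3) := by
  funext l
  fin_cases l <;> simp [intVec, Pi.single_apply]

theorem per_intVec {W : V3 → M33 → ℝ} (hWper : H1per W) (a b : ℤ) (x : V3) (ξ : M33) :
    W (x + intVec (a:ℝ) (b:ℝ)) ξ = W x ξ := by
  have h1 : x + intVec (a:ℝ) (b:ℝ) =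
      (x + (a:ℝ) • (Pi.single (0 : Fin 3) 1 : V3)) + (b:ℝ) • (Pi.single (1 : Fin 3) 1 : V3) := by
    rw [intVec_decomp, add_assoc]
  rw [h1, per_single hWper 1 (by norm_num) b, per_single hWper 0 (by norm_num) a]

/-! #### Step A : comparison of nearby scales -/

theorem openCyl_mono {s t : ℝ} (hst : s ≤ t) : openCyl s ⊆ openCyl t := by
  rintro x ⟨h0, h1, h2⟩
  exact ⟨by linarith, by linarith, h2⟩

theorem stepA {Φ : ℝ → ℝ} {W : V3 → M33 → ℝ} {β' β : ℝ} (ξα : M32)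
    (hΦ : IsYoung Φ) (hβ' : 0 < β') (hβ : 0 < β) (hW : Caratheodory W)
    (hWg : ∀ x ξ, β' * Φ (frobNorm ξ) - 1 / β' ≤ W x ξ ∧ W x ξ ≤ β * (1 + Φ (frobNorm ξ)))
    {s t : ℝ} (hs : 0 < s) (hst : s ≤ t) {φ : V3 → V3} (hφ : φ ∈ AdmSet s) :
    cellInf W ξα t (AdmSet t) ≤ cellE W ξα s φ + C0 Φ β ξα * (t^2 - s^2) := by
  have ht : 0 < t := lt_of_lt_of_le hs hst
  have hm := master ξα hΦ hβ' hβ hW hWg hs ht hφ ({0} : Finset V3)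
    (by
      intro c hc
      rw [Finset.mem_singleton] at hc
      subst hc
      rfl)
    (by
      intro c hc c' hc' hne
      rw [Finset.mem_singleton] at hc hc'
      exact absurd (hc.trans hc'.symm) hne)
    (by
      intro c hc
      rw [Finset.mem_singleton] at hc
      subst hc
      rw [inCell_zero]
      exact openCyl_mono hst)
    (by
      intro c hc x ξ
      rw [Finset.mem_singleton] at hc
      subst hc
      rw [add_zero])
  simpa using hm

/-! #### Step B : exact tiling -/

theorem nat_dist_ge_one {a b : ℕ} (h : a ≠ b) : (1:ℝ) ≤ |(a:ℝ) - (b:ℝ)| := by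
  rcases h.lt_or_gt with h' | h'
  · have hle : (a:ℝ) + 1 ≤ b := by exact_mod_cast h'
    rw [abs_sub_comm, abs_of_nonneg (by linarith)]
    linarith
  · have hle : (b:ℝ) + 1 ≤ a := by exact_mod_cast h'
    rw [abs_of_nonneg (by linarith)]
    linarith

def cvec (n k : ℕ) (p : Fin k × Fin k) : V3 := fun l =>
  if l = 0 then (n:ℝ)*(p.1:ℕ) - (n:ℝ)*((k:ℝ)-1)/2
  else if l = 1 then (n:ℝ)*(p.2:ℕ) - (n:ℝ)*((k:ℝ)-1)/2 else 0

theorem cvec_0 (n k : ℕ) (p : Fin k × Fin k) :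
    cvec n k p 0 = (n:ℝ)*((p.1 : ℕ):ℝ) - (n:ℝ)*((k:ℝ)-1)/2 := rfl

theorem cvec_1 (n k : ℕ) (p : Fin k × Fin k) :
    cvec n k p 1 = (n:ℝ)*((p.2 : ℕ):ℝ) - (n:ℝ)*((k:ℝ)-1)/2 := rfl

theorem cvec_2 (n k : ℕ) (p : Fin k × Fin k) : cvec n k p 2 = 0 := rfl

theorem cvec_inj {n k : ℕ} (hn : 0 < n) : Function.Injective (cvec n k) := by
  intro p q h
  have h0 := congrFun h 0
  have h1 := congrFun h 1
  rw [cvec_0, cvec_0] at h0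
  rw [cvec_1, cvec_1] at h1
  have hn' : (0:ℝ) < n := by exact_mod_cast hn
  have e0 : ((p.1 : ℕ) : ℝ) = ((q.1 : ℕ) : ℝ) := by
    have : (n:ℝ) * ((p.1 : ℕ):ℝ) = (n:ℝ) * ((q.1 : ℕ):ℝ) := by linarith
    exact mul_left_cancel₀ (ne_of_gt hn') this
  have e1 : ((p.2 : ℕ) : ℝ) = ((q.2 : ℕ) : ℝ) := by
    have : (n:ℝ) * ((p.2 : ℕ):ℝ) = (n:ℝ) * ((q.2 : ℕ):ℝ) := by linarith
    exact mul_left_cancel₀ (ne_of_gt hn') this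
  have e0' : (p.1 : ℕ) = (q.1 : ℕ) := by exact_mod_cast e0
  have e1' : (p.2 : ℕ) = (q.2 : ℕ) := by exact_mod_cast e1
  ext
  · exact e0'
  · exact e1'

end Stmt2Aux
namespace Stmt2Aux

open Set MeasureTheory

theorem stepB {Φ : ℝ → ℝ} {W : V3 → M33 → ℝ} {β' β : ℝ} (ξα : M32)
    (hΦ : IsYoung Φ) (hβ' : 0 < β') (hβ : 0 < β) (hW : Caratheodory W)
    (hWg : ∀ x ξ, β' * Φ (frobNorm ξ) - 1 / β' ≤ W x ξ ∧ W x ξ ≤ β * (1 + Φ (frobNorm ξ)))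
    (hWper : H1per W)
    {n k u : ℕ} (hn : n = u + u) (hn0 : 0 < n) (hk : 0 < k)
    {φ : V3 → V3} (hφ : φ ∈ AdmSet (n:ℝ)) :
    cellInf W ξα ((k:ℝ)*(n:ℝ)) (AdmSet ((k:ℝ)*(n:ℝ))) ≤ (k:ℝ)^2 * cellE W ξα (n:ℝ) φ := by
  classical
  set C : Finset V3 := Finset.univ.image (cvec n k) with hC
  have hn' : (0:ℝ) < n := by exact_mod_cast hn0
  have hk' : (0:ℝ) < k := by exact_mod_cast hk
  have hnu : (n:ℝ) = 2*(u:ℝ) := by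
    have : (n:ℝ) = (u:ℝ) + (u:ℝ) := by exact_mod_cast hn
    linarith
  have hcard : C.card = k * k := by
    rw [hC, Finset.card_image_of_injective _ (cvec_inj hn0), Finset.card_univ]
    simp
  have hmemC : ∀ c ∈ C, ∃ p : Fin k × Fin k, cvec n k p = c := by
    intro c hc
    rw [hC, Finset.mem_image] at hc
    obtain ⟨p, _, hp⟩ := hc
    exact ⟨p, hp⟩
  have hm := master ξα hΦ hβ' hβ hW hWg hn' (by positivity : (0:ℝ) < (k:ℝ)*(n:ℝ)) hφ C
    (by
      intro c hc
      obtain ⟨p, rfl⟩ := hmemC c hc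
      exact cvec_2 n k p)
    (by
      intro c hc c' hc' hne
      obtain ⟨p, rfl⟩ := hmemC c hc
      obtain ⟨q, rfl⟩ := hmemC c' hc'
      have hpq : p ≠ q := fun h => hne (by rw [h])
      have hcase : p.1 ≠ q.1 ∨ p.2 ≠ q.2 := by
        by_contra hcon
        push_neg at hcon
        exact hpq (Prod.ext hcon.1 hcon.2)
      rcases hcase with h' | h'
      · apply le_max_of_le_left
        rw [cvec_0, cvec_0]
        have e1 : (n:ℝ)*((p.1:ℕ):ℝ) - (n:ℝ)*((k:ℝ)-1)/2
            - ((n:ℝ)*((q.1:ℕ):ℝ) - (n:ℝ)*((k:ℝ)-1)/2) = (n:ℝ)*(((p.1:ℕ):ℝ) - ((q.1:ℕ):ℝ)) := by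
          ring
        rw [e1, abs_mul, abs_of_nonneg hn'.le]
        have h1 : (1:ℝ) ≤ |((p.1:ℕ):ℝ) - ((q.1:ℕ):ℝ)| :=
          nat_dist_ge_one (fun h => h' (Fin.ext h))
        nlinarith
      · apply le_max_of_le_right
        rw [cvec_1, cvec_1]
        have e1 : (n:ℝ)*((p.2:ℕ):ℝ) - (n:ℝ)*((k:ℝ)-1)/2
            - ((n:ℝ)*((q.2:ℕ):ℝ) - (n:ℝ)*((k:ℝ)-1)/2) = (n:ℝ)*(((p.2:ℕ):ℝ) - ((q.2:ℕ):ℝ)) := by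
          ring
        rw [e1, abs_mul, abs_of_nonneg hn'.le]
        have h1 : (1:ℝ) ≤ |((p.2:ℕ):ℝ) - ((q.2:ℕ):ℝ)| :=
          nat_dist_ge_one (fun h => h' (Fin.ext h))
        nlinarith)
    (by
      intro c hc
      obtain ⟨p, rfl⟩ := hmemC c hc
      intro x hx
      obtain ⟨hx0, hx1, hx2⟩ := hx
      rw [cvec_0] at hx0
      rw [cvec_1] at hx1
      have hp1 : ((p.1:ℕ):ℝ) ≤ (k:ℝ) - 1 := by
        have h1 : ((p.1:ℕ)) + 1 ≤ k := p.1.isLt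
        have h2 : (((p.1:ℕ)):ℝ) + 1 ≤ (k:ℝ) := by exact_mod_cast h1
        linarith
      have hp2 : ((p.2:ℕ):ℝ) ≤ (k:ℝ) - 1 := by
        have h1 : ((p.2:ℕ)) + 1 ≤ k := p.2.isLt
        have h2 : (((p.2:ℕ)):ℝ) + 1 ≤ (k:ℝ) := by exact_mod_cast h1
        linarith
      have hp1' : (0:ℝ) ≤ ((p.1:ℕ):ℝ) := Nat.cast_nonneg _
      have hp2' : (0:ℝ) ≤ ((p.2:ℕ):ℝ) := Nat.cast_nonneg _
      have hc0 : |(n:ℝ)*((p.1:ℕ):ℝ) - (n:ℝ)*((k:ℝ)-1)/2| ≤ (n:ℝ)*((k:ℝ)-1)/2 := by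
        rw [abs_le]
        constructor <;> nlinarith
      have hc1 : |(n:ℝ)*((p.2:ℕ):ℝ) - (n:ℝ)*((k:ℝ)-1)/2| ≤ (n:ℝ)*((k:ℝ)-1)/2 := by
        rw [abs_le]
        constructor <;> nlinarith
      refine ⟨?_, ?_, hx2⟩
      · have htri : |x 0| ≤ |x 0 - cvec n k p 0| + |cvec n k p 0| := by
          have := abs_add_le (x 0 - cvec n k p 0) (cvec n k p 0)
          simpa using this
        rw [cvec_0] at htri
        calc |x 0| ≤ |x 0 - cvec n k p 0| + |(n:ℝ)*((p.1:ℕ):ℝ) - (n:ℝ)*((k:ℝ)-1)/2| := htri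
          _ < (n:ℝ)/2 + (n:ℝ)*((k:ℝ)-1)/2 := by
              exact add_lt_add_of_lt_of_le hx0 hc0
          _ = (k:ℝ)*(n:ℝ)/2 := by ring
      · have htri : |x 1| ≤ |x 1 - cvec n k p 1| + |cvec n k p 1| := by
          have := abs_add_le (x 1 - cvec n k p 1) (cvec n k p 1)
          simpa using this
        rw [cvec_1] at htri
        calc |x 1| ≤ |x 1 - cvec n k p 1| + |(n:ℝ)*((p.2:ℕ):ℝ) - (n:ℝ)*((k:ℝ)-1)/2| := htri
          _ < (n:ℝ)/2 + (n:ℝ)*((k:ℝ)-1)/2 := by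
              exact add_lt_add_of_lt_of_le hx1 hc1
          _ = (k:ℝ)*(n:ℝ)/2 := by ring)
    (by
      intro c hc x ξ
      obtain ⟨p, rfl⟩ := hmemC c hc
      set a : ℤ := (n:ℤ)*((p.1:ℕ):ℤ) - (u:ℤ)*((k:ℤ)-1) with ha
      set b : ℤ := (n:ℤ)*((p.2:ℕ):ℤ) - (u:ℤ)*((k:ℤ)-1) with hb
      have hcv : cvec n k p = intVec ((a:ℤ):ℝ) ((b:ℤ):ℝ) := by
        funext l
        fin_cases l
        · show cvec n k p 0 = intVec ((a:ℤ):ℝ) ((b:ℤ):ℝ) 0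
          rw [cvec_0]
          have hiv : intVec ((a:ℤ):ℝ) ((b:ℤ):ℝ) 0 = ((a:ℤ):ℝ) := rfl
          rw [hiv, ha]
          push_cast
          rw [hnu]
          ring
        · show cvec n k p 1 = intVec ((a:ℤ):ℝ) ((b:ℤ):ℝ) 1
          rw [cvec_1]
          have hiv : intVec ((a:ℤ):ℝ) ((b:ℤ):ℝ) 1 = ((b:ℤ):ℝ) := rfl
          rw [hiv, hb]
          push_cast
          rw [hnu]
          ring
        · show cvec n k p 2 = intVec ((a:ℤ):ℝ) ((b:ℤ):ℝ) 2
          rw [cvec_2]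
          rfl
      rw [hcv]
      exact per_intVec hWper a b x ξ)
  have hcardR : ((C.card : ℕ) : ℝ) = (k:ℝ)^2 := by
    rw [hcard]
    push_cast
    ring
  rw [hcardR] at hm
  have hzero : ((k:ℝ)*(n:ℝ))^2 - (k:ℝ)^2 * ((n:ℝ))^2 = 0 := by ring
  calc cellInf W ξα ((k:ℝ)*(n:ℝ)) (AdmSet ((k:ℝ)*(n:ℝ)))
      ≤ (k:ℝ)^2 * cellE W ξα (n:ℝ) φ
        + C0 Φ β ξα * (((k:ℝ)*(n:ℝ))^2 - (k:ℝ)^2 * ((n:ℝ))^2) := hm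
    _ = (k:ℝ)^2 * cellE W ξα (n:ℝ) φ := by rw [hzero, mul_zero, add_zero]

end Stmt2Aux
namespace Stmt2Aux

open Set MeasureTheory Filter

/-- Scaled cell infimum. -/
def gfun (W : V3 → M33 → ℝ) (ξα : M32) : ℝ → ℝ :=
  fun t => (t^2)⁻¹ * cellInf W ξα t (AdmSet t)

/-- Uniform bound constant. -/
def CB (Φ : ℝ → ℝ) (β β' : ℝ) (ξα : M32) : ℝ := max (C0 Φ β ξα) (1/β')

section Final

variable {Φ : ℝ → ℝ} {W : V3 → M33 → ℝ} {β' β : ℝ} (ξα : M32)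

theorem CB_nonneg (hΦ : IsYoung Φ) (hβ' : 0 < β') (hβ : 0 < β) : 0 ≤ CB Φ β β' ξα :=
  le_trans (C0_nonneg ξα hΦ hβ) (le_max_left _ _)

theorem mfun_abs (hΦ : IsYoung Φ) (hβ' : 0 < β') (hβ : 0 < β) (hW : Caratheodory W)
    (hWg : ∀ x ξ, β' * Φ (frobNorm ξ) - 1 / β' ≤ W x ξ ∧ W x ξ ≤ β * (1 + Φ (frobNorm ξ)))
    {t : ℝ} (ht : 0 < t) :
    |cellInf W ξα t (AdmSet t)| ≤ CB Φ β β' ξα * t^2 := by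
  have h1 := cellInf_ge ξα hΦ hβ' hβ hW hWg ht
  have h2 := cellInf_le_C0 ξα hΦ hβ' hβ hW hWg ht
  have hb1 : C0 Φ β ξα ≤ CB Φ β β' ξα := le_max_left _ _
  have hb2 : 1/β' ≤ CB Φ β β' ξα := le_max_right _ _
  rw [abs_le]
  constructor
  · have : -(CB Φ β β' ξα) * t^2 ≤ -(1/β') * t^2 := by nlinarith
    linarith
  · nlinarith

theorem gfun_abs (hΦ : IsYoung Φ) (hβ' : 0 < β') (hβ : 0 < β) (hW : Caratheodory W)
    (hWg : ∀ x ξ, β' * Φ (frobNorm ξ) - 1 / β' ≤ W x ξ ∧ W x ξ ≤ β * (1 + Φ (frobNorm ξ)))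
    {t : ℝ} (ht : 1 ≤ t) :
    |gfun W ξα t| ≤ CB Φ β β' ξα := by
  have ht0 : (0:ℝ) < t := lt_of_lt_of_le one_pos ht
  have ht2 : (0:ℝ) < t^2 := by positivity
  have h := mfun_abs ξα hΦ hβ' hβ hW hWg ht0
  have : |gfun W ξα t| = (t^2)⁻¹ * |cellInf W ξα t (AdmSet t)| := by
    unfold gfun
    rw [abs_mul, abs_of_nonneg (by positivity : (0:ℝ) ≤ (t^2)⁻¹)]
  rw [this]
  calc (t^2)⁻¹ * |cellInf W ξα t (AdmSet t)| ≤ (t^2)⁻¹ * (CB Φ β β' ξα * t^2) := by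
        apply mul_le_mul_of_nonneg_left h (by positivity)
    _ = CB Φ β β' ξα * ((t^2)⁻¹ * t^2) := by ring
    _ = CB Φ β β' ξα := by rw [inv_mul_cancel₀ (ne_of_gt ht2), mul_one]

theorem gfun_boundedUnder_le (hΦ : IsYoung Φ) (hβ' : 0 < β') (hβ : 0 < β) (hW : Caratheodory W)
    (hWg : ∀ x ξ, β' * Φ (frobNorm ξ) - 1 / β' ≤ W x ξ ∧ W x ξ ≤ β * (1 + Φ (frobNorm ξ))) :
    IsBoundedUnder (· ≤ ·) atTop (gfun W ξα) := by
  refine ⟨CB Φ β β' ξα, ?_⟩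
  rw [Filter.eventually_map]
  filter_upwards [eventually_ge_atTop (1:ℝ)] with t ht
  exact (abs_le.1 (gfun_abs ξα hΦ hβ' hβ hW hWg ht)).2

theorem gfun_boundedUnder_ge (hΦ : IsYoung Φ) (hβ' : 0 < β') (hβ : 0 < β) (hW : Caratheodory W)
    (hWg : ∀ x ξ, β' * Φ (frobNorm ξ) - 1 / β' ≤ W x ξ ∧ W x ξ ≤ β * (1 + Φ (frobNorm ξ))) :
    IsBoundedUnder (· ≥ ·) atTop (gfun W ξα) := by
  refine ⟨-(CB Φ β β' ξα), ?_⟩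
  rw [Filter.eventually_map]
  filter_upwards [eventually_ge_atTop (1:ℝ)] with t ht
  exact (abs_le.1 (gfun_abs ξα hΦ hβ' hβ hW hWg ht)).1

end Final

end Stmt2Aux
namespace Stmt2Aux

open Set MeasureTheory Filter

set_option maxHeartbeats 1000000 in
theorem key_bound {Φ : ℝ → ℝ} {W : V3 → M33 → ℝ} {β' β : ℝ} (ξα : M32)
    (hΦ : IsYoung Φ) (hβ' : 0 < β') (hβ : 0 < β) (hW : Caratheodory W)
    (hWg : ∀ x ξ, β' * Φ (frobNorm ξ) - 1 / β' ≤ W x ξ ∧ W x ξ ≤ β * (1 + Φ (frobNorm ξ)))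
    (hWper : H1per W)
    {s : ℝ} (hs1 : 1 ≤ s) {ε : ℝ} (hε : 0 < ε) :
    limsup (gfun W ξα) atTop ≤ gfun W ξα s + 3*ε
      + (8 * CB Φ β β' ξα + 8 * C0 Φ β ξα) / s := by
  set Cb := CB Φ β β' ξα with hCbdef
  set c0 := C0 Φ β ξα with hc0def
  have hc00 : 0 ≤ c0 := C0_nonneg ξα hΦ hβ
  have hCb0 : 0 ≤ Cb := CB_nonneg ξα hΦ hβ' hβ
  have hs0 : (0:ℝ) < s := by linarith
  -- choice of the even integer n
  set u : ℕ := ⌈s/2⌉₊ with hu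
  have hn : u + u = u + u := rfl
  set n : ℕ := u + u with hndef
  have hu1 : 1 ≤ u := by
    rw [hu]
    exact Nat.one_le_iff_ne_zero.2 (by positivity)
  have hn0 : 0 < n := by omega
  have hnr : (n:ℝ) = 2*(u:ℝ) := by rw [hndef]; push_cast; ring
  have hsn : s ≤ (n:ℝ) := by
    have h : s/2 ≤ (u:ℝ) := by rw [hu]; exact Nat.le_ceil (s/2)
    rw [hnr]
    linarith
  have hns : (n:ℝ) ≤ s + 2 := by
    have h : (u:ℝ) < s/2 + 1 := by rw [hu]; exact Nat.ceil_lt_add_one (by positivity : (0:ℝ) ≤ s/2)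
    rw [hnr]
    linarith
  have hn1 : (1:ℝ) ≤ (n:ℝ) := by linarith
  have hnpos : (0:ℝ) < (n:ℝ) := by linarith
  have hn2pos : (0:ℝ) < (n:ℝ)^2 := by positivity
  set m : ℝ → ℝ := fun t => cellInf W ξα t (AdmSet t) with hmdef
  have hgfun : ∀ t : ℝ, gfun W ξα t = m t / t^2 := by
    intro t
    rw [hmdef]
    simp only [gfun]
    rw [inv_mul_eq_div]
  -- near-optimal test functions
  obtain ⟨φs, hφs, hφsE⟩ := exists_near_optimal ξα hΦ hβ' hβ hW hWg hs0 hε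
  have mn_le : m (n:ℝ) ≤ m s + ε + c0 * ((n:ℝ)^2 - s^2) := by
    have h := stepA ξα hΦ hβ' hβ hW hWg hs0 hsn hφs
    have h2 : cellE W ξα s φs ≤ m s + ε := hφsE
    simp only [hmdef]
    linarith
  obtain ⟨φn, hφn, hφnE⟩ := exists_near_optimal ξα hΦ hβ' hβ hW hWg hnpos hε
  have hmabs_n : |m (n:ℝ)| ≤ Cb * (n:ℝ)^2 := mfun_abs ξα hΦ hβ' hβ hW hWg hnpos
  have hmabs_s : |m s| ≤ Cb * s^2 := mfun_abs ξα hΦ hβ' hβ hW hWg hs0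
  clear_value Cb c0 u n m
  have hmx : ∀ t' : ℝ, m t' = cellInf W ξα t' (AdmSet t') := fun t' => by rw [hmdef]
  set q := m (n:ℝ)/(n:ℝ)^2 with hqdef
  have hq : m (n:ℝ) = q * (n:ℝ)^2 := (div_mul_cancel₀ _ (ne_of_gt hn2pos)).symm
  have hqabs : |q| ≤ Cb := by
    rw [hqdef, abs_div, abs_of_nonneg hn2pos.le, div_le_iff₀ hn2pos]
    linarith [hmabs_n]
  have hql : -Cb ≤ q := (abs_le.1 hqabs).1
  have hqu : q ≤ Cb := (abs_le.1 hqabs).2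
  clear_value q
  -- eventual bound
  have hev : ∀ t : ℝ, (n:ℝ) ≤ t →
      gfun W ξα t ≤ q + 2*ε + (2*Cb + 2*c0)*(n:ℝ)/t := by
    intro t htn
    have ht1 : (1:ℝ) ≤ t := le_trans hn1 htn
    have ht0 : (0:ℝ) < t := by linarith
    have ht2 : (0:ℝ) < t^2 := by positivity
    set k : ℕ := ⌊t/(n:ℝ)⌋₊ with hk
    have hk1 : 1 ≤ k := by
      rw [hk]
      apply Nat.le_floor
      rw [Nat.cast_one, le_div_iff₀ hnpos]
      linarith
    have hkr1 : (1:ℝ) ≤ (k:ℝ) := by exact_mod_cast hk1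
    have hknle : (k:ℝ)*(n:ℝ) ≤ t := by
      have h1 : (k:ℝ) ≤ t/(n:ℝ) := Nat.floor_le (by positivity)
      calc (k:ℝ)*(n:ℝ) ≤ (t/(n:ℝ))*(n:ℝ) := by
            linarith [mul_le_mul_of_nonneg_right h1 hnpos.le]
        _ = t := by field_simp
    have hknpos : (0:ℝ) < (k:ℝ)*(n:ℝ) := by positivity
    have hkngt : t < (k:ℝ)*(n:ℝ) + (n:ℝ) := by
      have h1 : t/(n:ℝ) < (k:ℝ) + 1 := Nat.lt_floor_add_one _
      calc t = (t/(n:ℝ))*(n:ℝ) := by field_simp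
        _ < ((k:ℝ)+1)*(n:ℝ) := by
            linarith [mul_lt_mul_of_pos_right h1 hnpos]
        _ = (k:ℝ)*(n:ℝ) + (n:ℝ) := by ring
    clear_value k
    obtain ⟨φk, hφk, hφkE⟩ := exists_near_optimal ξα hΦ hβ' hβ hW hWg hknpos hε
    have h1 : m t ≤ m ((k:ℝ)*(n:ℝ)) + ε + c0 * (t^2 - ((k:ℝ)*(n:ℝ))^2) := by
      have h := stepA ξα hΦ hβ' hβ hW hWg hknpos hknle hφk
      rw [← hc0def] at h
      simp only [hmx]
      linarith [hφkE]
    have h2 : m ((k:ℝ)*(n:ℝ)) ≤ (k:ℝ)^2 * (m (n:ℝ) + ε) := by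
      have h := stepB ξα hΦ hβ' hβ hW hWg hWper hndef hn0 hk1 hφn
      have hk2 : (0:ℝ) ≤ (k:ℝ)^2 := by positivity
      simp only [hmx]
      linarith [mul_le_mul_of_nonneg_left hφnE hk2]
    have hsq : ((k:ℝ)*(n:ℝ))^2 = (k:ℝ)^2*(n:ℝ)^2 := by ring
    rw [hsq] at h1
    have hA2 : (k:ℝ)^2*(n:ℝ)^2 ≤ t^2 := by
      have h' := mul_le_mul hknle hknle hknpos.le ht0.le
      linarith [h']
    have hA1 : t^2 - (k:ℝ)^2*(n:ℝ)^2 ≤ 2*(n:ℝ)*t := by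
      have h' : 0 ≤ ((k:ℝ)*(n:ℝ) + (n:ℝ) - t) * (t + (k:ℝ)*(n:ℝ)) :=
        mul_nonneg (by linarith) (by linarith)
      have h'' := mul_le_mul_of_nonneg_right hknle hnpos.le
      linarith [h', h'']
    have hk2t : (k:ℝ)^2 ≤ t^2 := by
      have hkt : (k:ℝ) ≤ t := by
        linarith [mul_le_mul_of_nonneg_left hn1 (by positivity : (0:ℝ) ≤ (k:ℝ))]
      linarith [mul_le_mul hkt hkt (by positivity : (0:ℝ) ≤ (k:ℝ)) ht0.le]
    have hi : (k:ℝ)^2*q*(n:ℝ)^2 ≤ q*t^2 + 2*Cb*(n:ℝ)*t := by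
      linarith [mul_nonneg (by linarith : (0:ℝ) ≤ q + Cb)
        (by linarith : (0:ℝ) ≤ t^2 - (k:ℝ)^2*(n:ℝ)^2),
        mul_le_mul_of_nonneg_left hA1 hCb0]
    have hεk : ε*(k:ℝ)^2 ≤ ε*t^2 := mul_le_mul_of_nonneg_left hk2t hε.le
    have hε1 : ε ≤ ε*t^2 := by
      have ht2' : (1:ℝ) ≤ t^2 := by
        linarith [mul_le_mul ht1 ht1 zero_le_one ht0.le]
      linarith [mul_le_mul_of_nonneg_left ht2' hε.le]
    have hc0b : c0*(t^2 - (k:ℝ)^2*(n:ℝ)^2) ≤ 2*c0*(n:ℝ)*t := by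
      linarith [mul_le_mul_of_nonneg_left hA1 hc00]
    have h2' : m ((k:ℝ)*(n:ℝ)) ≤ (k:ℝ)^2*q*(n:ℝ)^2 + (k:ℝ)^2*ε := by
      rw [hq] at h2
      linarith [h2]
    have hbig : m t ≤ q*t^2 + 2*ε*t^2 + (2*Cb+2*c0)*(n:ℝ)*t := by
      linarith [h1, h2', hi, hεk, hε1, hc0b]
    rw [hgfun t, div_le_iff₀ ht2]
    have hexp : (q + 2*ε + (2*Cb+2*c0)*(n:ℝ)/t)*t^2
        = q*t^2 + 2*ε*t^2 + (2*Cb+2*c0)*(n:ℝ)*t := by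
      field_simp
    rw [hexp]
    exact hbig
  -- pass to the limsup
  have hlimsup1 : limsup (gfun W ξα) atTop ≤ q + 2*ε := by
    have h0 : Tendsto (fun t : ℝ => (2*Cb+2*c0)*(n:ℝ)/t) atTop (nhds 0) := by
      have h1 := (tendsto_inv_atTop_zero (𝕜 := ℝ)).const_mul ((2*Cb+2*c0)*(n:ℝ))
      simpa [div_eq_mul_inv] using h1
    have htendh : Tendsto (fun t : ℝ => q + 2*ε + (2*Cb+2*c0)*(n:ℝ)/t) atTop
        (nhds (q + 2*ε)) := by
      have := (tendsto_const_nhds (x := q + 2*ε) (f := (atTop : Filter ℝ))).add h0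
      simpa using this
    have hle : limsup (gfun W ξα) atTop
        ≤ limsup (fun t : ℝ => q + 2*ε + (2*Cb+2*c0)*(n:ℝ)/t) atTop := by
      apply limsup_le_limsup
      · filter_upwards [eventually_ge_atTop ((n:ℝ))] with t ht
        exact hev t ht
      · exact (gfun_boundedUnder_ge ξα hΦ hβ' hβ hW hWg).isCoboundedUnder_le
      · exact htendh.isBoundedUnder_le
    rwa [htendh.limsup_eq] at hle
  -- compare q with g s
  set r := m s/s^2 with hrdef
  have hgs : gfun W ξα s = r := by
    rw [hgfun s]
  have hs2pos : (0:ℝ) < s^2 := by positivity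
  have hqs : m s = r * s^2 := (div_mul_cancel₀ _ (ne_of_gt hs2pos)).symm
  have hrabs : |r| ≤ Cb := by
    rw [hrdef, abs_div, abs_of_nonneg hs2pos.le, div_le_iff₀ hs2pos]
    linarith [hmabs_s]
  have hrl : -Cb ≤ r := (abs_le.1 hrabs).1
  have hd : (n:ℝ)^2 - s^2 ≤ 8*s := by
    have h' := mul_self_le_mul_self hnpos.le hns
    have hh : (n:ℝ)*(n:ℝ) = (n:ℝ)^2 := by ring
    nlinarith [h']
  have hfinal : q ≤ r + ε + (8*Cb + 8*c0)/s := by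
    set w := (8*Cb + 8*c0)/s with hwdef
    have hw0 : 0 ≤ w := by positivity
    have hfs : w * s = 8*Cb + 8*c0 := by
      rw [hwdef]
      field_simp
    have hss : s^2 ≤ (n:ℝ)^2 := by
      linarith [mul_self_le_mul_self hs0.le hsn]
    rw [hqdef, div_le_iff₀ hn2pos]
    have hr1 : r*s^2 ≤ r*(n:ℝ)^2 + Cb*((n:ℝ)^2 - s^2) := by
      linarith [mul_nonneg (by linarith : (0:ℝ) ≤ Cb + r) (by linarith : (0:ℝ) ≤ (n:ℝ)^2 - s^2)]
    have hr2 : Cb*((n:ℝ)^2 - s^2) ≤ 8*Cb*s := by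
      linarith [mul_le_mul_of_nonneg_left hd hCb0]
    have hr3 : c0*((n:ℝ)^2 - s^2) ≤ 8*c0*s := by
      linarith [mul_le_mul_of_nonneg_left hd hc00]
    have hr4 : ε ≤ ε*(n:ℝ)^2 := by
      have hn2' : (1:ℝ) ≤ (n:ℝ)^2 := by
        linarith [mul_le_mul hn1 hn1 zero_le_one hnpos.le]
      linarith [mul_le_mul_of_nonneg_left hn2' hε.le]
    have hr5 : 8*Cb*s + 8*c0*s = w*s^2 := by
      have : w*s^2 = (w*s)*s := by ring
      rw [this, hfs]
      ring
    have hr6 : w*s^2 ≤ w*(n:ℝ)^2 := mul_le_mul_of_nonneg_left hss hw0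
    have hexp : (r + ε + w)*(n:ℝ)^2 = r*(n:ℝ)^2 + ε*(n:ℝ)^2 + w*(n:ℝ)^2 := by ring
    rw [hexp]
    linarith [mn_le, hqs]
  rw [hgs]
  have h9 : q + 2*ε ≤ r + 3*ε + (8*Cb + 8*c0)/s := by linarith
  linarith [hlimsup1]

end Stmt2Aux
/-- the limit defining the homogenized density exists (liminf = limsup)
and is a finite real number. -/
theorem stmt_2
    (Φ : ℝ → ℝ) (hΦ : IsYoung Φ) (hΔ : Delta2 Φ) (hΝ : Nabla2 Φ)
    (W : V3 → M33 → ℝ) (hW : Caratheodory W) (hWper : H1per W)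
    (β' β : ℝ) (hβ' : 0 < β') (hββ : β' < β)
    (hWg : ∀ x ξ, β' * Φ (frobNorm ξ) - 1 / β' ≤ W x ξ ∧ W x ξ ≤ β * (1 + Φ (frobNorm ξ)))
    (ξα : M32) :
    ∃ L : ℝ, Tendsto (fun t : ℝ => (t ^ 2)⁻¹ * cellInf W ξα t (AdmSet t)) atTop (nhds L) := by
  classical
  have hβ : 0 < β := lt_trans hβ' hββ
  have hbdd_le := Stmt2Aux.gfun_boundedUnder_le ξα hΦ hβ' hβ hW hWg
  have hbdd_ge := Stmt2Aux.gfun_boundedUnder_ge ξα hΦ hβ' hβ hW hWg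
  set Kc : ℝ := 8 * Stmt2Aux.CB Φ β β' ξα + 8 * Stmt2Aux.C0 Φ β ξα with hKc
  have hls_le : ∀ ε : ℝ, 0 < ε → limsup (Stmt2Aux.gfun W ξα) atTop
      ≤ liminf (Stmt2Aux.gfun W ξα) atTop + 3*ε := by
    intro ε hε
    have hatend : Tendsto (fun s : ℝ => limsup (Stmt2Aux.gfun W ξα) atTop - 3*ε - Kc/s) atTop
        (nhds (limsup (Stmt2Aux.gfun W ξα) atTop - 3*ε)) := by
      have h0 : Tendsto (fun s : ℝ => Kc/s) atTop (nhds 0) := by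
        have h1 := (tendsto_inv_atTop_zero (𝕜 := ℝ)).const_mul Kc
        simpa [div_eq_mul_inv] using h1
      have h2 := (tendsto_const_nhds
        (x := limsup (Stmt2Aux.gfun W ξα) atTop - 3*ε) (f := (atTop : Filter ℝ))).sub h0
      simpa using h2
    have hev : ∀ᶠ s in (atTop : Filter ℝ),
        limsup (Stmt2Aux.gfun W ξα) atTop - 3*ε - Kc/s ≤ Stmt2Aux.gfun W ξα s := by
      filter_upwards [eventually_ge_atTop (1:ℝ)] with s' hs'
      have hkey := Stmt2Aux.key_bound ξα hΦ hβ' hβ hW hWg hWper hs' hε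
      rw [← hKc] at hkey
      linarith
    have hll := liminf_le_liminf hev (hatend.isBoundedUnder_ge)
      (hbdd_le.isCoboundedUnder_ge)
    rw [hatend.liminf_eq] at hll
    linarith
  have hls : limsup (Stmt2Aux.gfun W ξα) atTop ≤ liminf (Stmt2Aux.gfun W ξα) atTop := by
    apply le_of_forall_pos_le_add
    intro ε hε
    have := hls_le (ε/3) (by linarith)
    linarith
  have hsl : liminf (Stmt2Aux.gfun W ξα) atTop ≤ limsup (Stmt2Aux.gfun W ξα) atTop :=
    liminf_le_limsup hbdd_le hbdd_ge
  refine ⟨limsup (Stmt2Aux.gfun W ξα) atTop, ?_⟩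
  exact tendsto_of_liminf_eq_limsup (le_antisymm hsl hls) rfl hbdd_le hbdd_ge
end
end
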